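/- arXiv:1909.02540 — 5 statements merged into one kernel-verified Lean document; each statement's English description precedes it below -/
import Mathlib

section
/- Let F be a nonempty set of density matrices on ℂ^d and F' a set of density matrices on ℂ^{d'}. Let E : M_d(ℂ) → M_{d'}(ℂ) be a positive trace-preserving linear map such that E(ω) ∈ F' for every ω ∈ F. Let ρ be a full-rank density matrix on ℂ^d, let ψ ∈ ℂ^{d'} be a unit vector, and let ε ≥ 0 satisfy ⟨ψ, E(ρ) ψ⟩ ≥ 1 − ε. Then ε ≥ λ_min(ρ)·(1 − f_ψ), where f_ψ := sup_{ω ∈ F'} ⟨ψ, ω ψ⟩. (Theorem 1, deterministic case: no free deterministic protocol can purify a full-rank state to a pure target with error below λ_min(ρ)(1 − f_ψ).) -/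
open scoped Matrix ComplexOrder

noncomputable section

/-- A density matrix: a positive semidefinite complex matrix with unit trace. -/
def IsDensity {n : Type*} [Fintype n] (A : Matrix n n ℂ) : Prop :=
  A.PosSemidef ∧ A.trace = 1

/-- The smallest eigenvalue of a Hermitian matrix (`0` by convention otherwise). -/
noncomputable def minEig {n : Type*} [Fintype n] [DecidableEq n] (A : Matrix n n ℂ) : ℝ :=
  letI := Classical.propDecidable A.IsHermitian
  if h : A.IsHermitian then ⨅ i, h.eigenvalues i else 0

/-- The overlap `⟨ψ, A ψ⟩` (as a real number). -/
noncomputable def overlap {n : Type*} [Fintype n] (A : Matrix n n ℂ) (ψ : n → ℂ) : ℝ :=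
  (dotProduct (star ψ) (A.mulVec ψ)).re

/-- `f_ψ = sup_{ω ∈ F} ⟨ψ, ω ψ⟩`, with the convention `sup ∅ = 0`. -/
noncomputable def maxOverlap {n : Type*} [Fintype n] (F : Set (Matrix n n ℂ)) (ψ : n → ℂ) : ℝ :=
  sSup ((fun ω => overlap ω ψ) '' F)

/-- A positive map: it sends positive semidefinite matrices to positive semidefinite matrices. -/
def PosMap {n m : Type*} [Fintype n] [Fintype m]
    (Φ : Matrix n n ℂ →ₗ[ℂ] Matrix m m ℂ) : Prop :=
  ∀ X, X.PosSemidef → (Φ X).PosSemidef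

/-- A trace-preserving map. -/
def TracePreserving {n m : Type*} [Fintype n] [Fintype m]
    (Φ : Matrix n n ℂ →ₗ[ℂ] Matrix m m ℂ) : Prop :=
  ∀ X, (Φ X).trace = X.trace


set_option linter.unusedSectionVars false

section Aux
open Matrix

variable {n : Type*} [Fintype n] [DecidableEq n]

lemma smul_psd {A : Matrix n n ℂ} (hA : A.PosSemidef) {c : ℝ} (hc : 0 ≤ c) :
    ((c : ℂ) • A).PosSemidef := by
  rw [Matrix.posSemidef_iff_dotProduct_mulVec]
  constructor
  · unfold Matrix.IsHermitian
    rw [Matrix.conjTranspose_smul, hA.1]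
    simp
  · intro x
    rw [Matrix.smul_mulVec, dotProduct_smul]
    exact smul_nonneg (by simpa using hc) (hA.dotProduct_mulVec_nonneg x)

lemma sub_smul_one_psd {A : Matrix n n ℂ} (hA : A.IsHermitian) {c : ℝ}
    (h : ∀ i, c ≤ hA.eigenvalues i) : (A - (c : ℂ) • 1).PosSemidef := by
  have hU : (hA.eigenvectorUnitary : Matrix n n ℂ) * star (hA.eigenvectorUnitary : Matrix n n ℂ) = 1 :=
    Matrix.mem_unitaryGroup_iff.mp hA.eigenvectorUnitary.2
  have key : A - (c : ℂ) • 1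
      = (hA.eigenvectorUnitary : Matrix n n ℂ) *
        (Matrix.diagonal (RCLike.ofReal ∘ hA.eigenvalues) - (c:ℂ) • 1) *
        (hA.eigenvectorUnitary : Matrix n n ℂ)ᴴ := by
    rw [← Matrix.star_eq_conjTranspose, Matrix.mul_sub, Matrix.sub_mul, ← hA.spectral_theorem.trans (Unitary.conjStarAlgAut_apply _ _),
      mul_smul_comm, mul_one, Matrix.smul_mul, hU]
  rw [key]
  refine Matrix.PosSemidef.mul_mul_conjTranspose_same ?_ _
  have hd : Matrix.diagonal (RCLike.ofReal ∘ hA.eigenvalues) - (c:ℂ) • (1 : Matrix n n ℂ)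
      = Matrix.diagonal (fun i => ((hA.eigenvalues i - c : ℝ) : ℂ)) := by
    rw [← Matrix.diagonal_one, ← Matrix.diagonal_smul, Matrix.diagonal_sub]
    congr 1; funext i; simp
  rw [hd]
  refine Matrix.PosSemidef.diagonal fun i => ?_
  simpa using sub_nonneg.mpr (h i)

lemma smul_one_sub_psd {A : Matrix n n ℂ} (hA : A.IsHermitian) {c : ℝ}
    (h : ∀ i, hA.eigenvalues i ≤ c) : ((c : ℂ) • 1 - A).PosSemidef := by
  have hU : (hA.eigenvectorUnitary : Matrix n n ℂ) * star (hA.eigenvectorUnitary : Matrix n n ℂ) = 1 :=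
    Matrix.mem_unitaryGroup_iff.mp hA.eigenvectorUnitary.2
  have key : (c : ℂ) • 1 - A
      = (hA.eigenvectorUnitary : Matrix n n ℂ) *
        ((c:ℂ) • 1 - Matrix.diagonal (RCLike.ofReal ∘ hA.eigenvalues)) *
        (hA.eigenvectorUnitary : Matrix n n ℂ)ᴴ := by
    rw [← Matrix.star_eq_conjTranspose, Matrix.mul_sub, Matrix.sub_mul, ← hA.spectral_theorem.trans (Unitary.conjStarAlgAut_apply _ _),
      mul_smul_comm, mul_one, Matrix.smul_mul, hU]
  rw [key]
  refine Matrix.PosSemidef.mul_mul_conjTranspose_same ?_ _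
  have hd : (c:ℂ) • (1 : Matrix n n ℂ) - Matrix.diagonal (RCLike.ofReal ∘ hA.eigenvalues)
      = Matrix.diagonal (fun i => ((c - hA.eigenvalues i : ℝ) : ℂ)) := by
    rw [← Matrix.diagonal_one, ← Matrix.diagonal_smul, Matrix.diagonal_sub]
    congr 1; funext i; simp
  rw [hd]
  refine Matrix.PosSemidef.diagonal fun i => ?_
  simpa using sub_nonneg.mpr (h i)

lemma trace_eq_sum_eig {A : Matrix n n ℂ} (hA : A.IsHermitian) :
    A.trace = ∑ i, (hA.eigenvalues i : ℂ) := by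
  have hU : star (hA.eigenvectorUnitary : Matrix n n ℂ) * (hA.eigenvectorUnitary : Matrix n n ℂ) = 1 :=
    Matrix.mem_unitaryGroup_iff'.mp hA.eigenvectorUnitary.2
  conv_lhs => rw [hA.spectral_theorem, Unitary.conjStarAlgAut_apply]
  rw [Matrix.trace_mul_cycle, hU, Matrix.one_mul, Matrix.trace_diagonal]
  simp

lemma overlap_add (A B : Matrix n n ℂ) (ψ : n → ℂ) :
    overlap (A + B) ψ = overlap A ψ + overlap B ψ := by
  simp [overlap, Matrix.add_mulVec, dotProduct_add]

lemma overlap_smul (c : ℝ) (A : Matrix n n ℂ) (ψ : n → ℂ) :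
    overlap ((c : ℂ) • A) ψ = c * overlap A ψ := by
  simp [overlap, Matrix.smul_mulVec, dotProduct_smul, Complex.re_ofReal_mul]

lemma overlap_nonneg {A : Matrix n n ℂ} (hA : A.PosSemidef) (ψ : n → ℂ) :
    0 ≤ overlap A ψ := by
  simpa [overlap] using hA.re_dotProduct_nonneg ψ

lemma overlap_le_trace_re {A : Matrix n n ℂ} (hA : A.PosSemidef) {ψ : n → ℂ}
    (hψ : dotProduct (star ψ) ψ = 1) : overlap A ψ ≤ A.trace.re := by
  classical
  set U : Matrix n n ℂ := (hA.1.eigenvectorUnitary : Matrix n n ℂ) with hUdef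
  have hUU : U * star U = 1 := Matrix.mem_unitaryGroup_iff.mp hA.1.eigenvectorUnitary.2
  set φ : n → ℂ := star U *ᵥ ψ with hφdef
  have hstarφ : star φ = star ψ ᵥ* U := by
    rw [hφdef, Matrix.star_mulVec, Matrix.star_eq_conjTranspose, Matrix.conjTranspose_conjTranspose]
  have hsum : ∑ i, Complex.normSq (φ i) = 1 := by
    have h1 : dotProduct (star φ) φ = 1 := by
      rw [hstarφ, ← dotProduct_mulVec, Matrix.mulVec_mulVec, hUU, Matrix.one_mulVec, hψ]
    have := congrArg Complex.re h1
    simpa [dotProduct, Complex.mul_conj', Complex.normSq_apply] using this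
  have hov : overlap A ψ = ∑ i, hA.1.eigenvalues i * Complex.normSq (φ i) := by
    have : dotProduct (star ψ) (A *ᵥ ψ)
        = ∑ i, (hA.1.eigenvalues i : ℂ) * Complex.normSq (φ i) := by
      conv_lhs => rw [hA.1.spectral_theorem, Unitary.conjStarAlgAut_apply]
      rw [← Matrix.mulVec_mulVec, ← Matrix.mulVec_mulVec, dotProduct_mulVec,
        ← hstarφ, ← hφdef]
      simp only [dotProduct, Matrix.mulVec_diagonal, Function.comp_apply, Pi.star_apply]
      refine Finset.sum_congr rfl fun i _ => ?_
      rw [Complex.normSq_eq_conj_mul_self, mul_left_comm]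
      rfl
    simp [overlap, this, Complex.re_ofReal_mul]
  have htr : A.trace.re = ∑ i, hA.1.eigenvalues i := by
    rw [trace_eq_sum_eig hA.1]
    simp
  rw [hov, htr]
  refine Finset.sum_le_sum fun i _ => ?_
  have h1 : Complex.normSq (φ i) ≤ 1 := by
    rw [← hsum]
    exact Finset.single_le_sum (fun j _ => Complex.normSq_nonneg _) (Finset.mem_univ i)
  have := hA.eigenvalues_nonneg i
  nlinarith [Complex.normSq_nonneg (φ i)]

lemma overlap_one_sub_psd {A : Matrix n n ℂ} (hA : A.PosSemidef) (htr : A.trace = 1) :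
    ((1 : Matrix n n ℂ) - A).PosSemidef := by
  have hH : A.IsHermitian := hA.1
  have hsum : ∑ i, hH.eigenvalues i = 1 := by
    have h := trace_eq_sum_eig hH
    rw [htr] at h
    have h2 := congrArg Complex.re h.symm
    simpa using h2
  have hle1 : ∀ i, hH.eigenvalues i ≤ 1 := by
    intro i
    rw [← hsum]
    exact Finset.single_le_sum (fun j _ => hA.eigenvalues_nonneg j) (Finset.mem_univ i)
  have := smul_one_sub_psd hH (c := 1) hle1
  simpa using this

end Aux

/-- **Theorem 1, deterministic case.**  No free deterministic protocol can purify a full-rank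
state to a pure target with error below `λ_min(ρ)(1 - f_ψ)`. -/
theorem no_go_purification_deterministic {d d' : ℕ}
    (F : Set (Matrix (Fin d) (Fin d) ℂ)) (hFne : F.Nonempty)
    (hFden : ∀ ω ∈ F, IsDensity ω)
    (F' : Set (Matrix (Fin d') (Fin d') ℂ)) (hF'den : ∀ ω ∈ F', IsDensity ω)
    (E : Matrix (Fin d) (Fin d) ℂ →ₗ[ℂ] Matrix (Fin d') (Fin d') ℂ)
    (hEpos : PosMap E) (hEtp : TracePreserving E)
    (hEfree : ∀ ω ∈ F, E ω ∈ F')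
    (ρ : Matrix (Fin d) (Fin d) ℂ) (hρ : IsDensity ρ) (hρfull : 0 < minEig ρ)
    (ψ : Fin d' → ℂ) (hψ : dotProduct (star ψ) ψ = 1)
    (ε : ℝ) (hε : 0 ≤ ε)
    (hfid : 1 - ε ≤ overlap (E ρ) ψ) :
    minEig ρ * (1 - maxOverlap F' ψ) ≤ ε := by
  classical
  obtain ⟨ω₀, hω₀⟩ := hFne
  have hH : ρ.IsHermitian := hρ.1.1
  have hlam0 : 0 ≤ minEig ρ := le_of_lt hρfull
  have hne : Nonempty (Fin d) := by
    by_contra h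
    rw [not_nonempty_iff] at h
    have h0 : minEig ρ = 0 := by
      simp only [minEig]
      rw [dif_pos hH]
      rw [iInf_of_isEmpty]
      exact Real.sInf_empty
    rw [h0] at hρfull
    exact lt_irrefl 0 hρfull
  have hmin : ∀ i, minEig ρ ≤ hH.eigenvalues i := by
    intro i
    simp only [minEig]
    rw [dif_pos hH]
    exact ciInf_le (Set.Finite.bddBelow (Set.finite_range _)) i
  have h1 : (ρ - ((minEig ρ : ℝ) : ℂ) • 1).PosSemidef := sub_smul_one_psd hH hmin
  have hω₀d := hFden ω₀ hω₀
  have h2 : ((1 : Matrix (Fin d) (Fin d) ℂ) - ω₀).PosSemidef :=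
    overlap_one_sub_psd hω₀d.1 hω₀d.2
  have hσ : (ρ - ((minEig ρ : ℝ) : ℂ) • ω₀).PosSemidef := by
    have hdec : ρ - ((minEig ρ : ℝ) : ℂ) • ω₀
        = (ρ - ((minEig ρ : ℝ) : ℂ) • 1) + ((minEig ρ : ℝ) : ℂ) • (1 - ω₀) := by
      rw [smul_sub]; abel
    rw [hdec]
    exact h1.add (smul_psd h2 hlam0)
  have hEσ := hEpos _ hσ
  have hEσtr : ((E (ρ - ((minEig ρ : ℝ) : ℂ) • ω₀)).trace).re = 1 - minEig ρ := by
    rw [hEtp, Matrix.trace_sub, Matrix.trace_smul, hρ.2, hω₀d.2]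
    simp
  have hov1 : overlap (E (ρ - ((minEig ρ : ℝ) : ℂ) • ω₀)) ψ ≤ 1 - minEig ρ := by
    rw [← hEσtr]
    exact overlap_le_trace_re hEσ hψ
  have hdecomp : overlap (E ρ) ψ
      = minEig ρ * overlap (E ω₀) ψ + overlap (E (ρ - ((minEig ρ : ℝ) : ℂ) • ω₀)) ψ := by
    have hEρ : E ρ = ((minEig ρ : ℝ) : ℂ) • E ω₀ + E (ρ - ((minEig ρ : ℝ) : ℂ) • ω₀) := by
      rw [map_sub, map_smul]; abel
    rw [hEρ, overlap_add, overlap_smul]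
  have hbdd : BddAbove ((fun ω => overlap ω ψ) '' F') := by
    refine ⟨1, ?_⟩
    rintro x ⟨ω, hω, rfl⟩
    have h := overlap_le_trace_re (hF'den ω hω).1 hψ
    rw [(hF'den ω hω).2] at h
    simpa using h
  have hmem : overlap (E ω₀) ψ ≤ maxOverlap F' ψ :=
    le_csSup hbdd ⟨E ω₀, hEfree ω₀ hω₀, rfl⟩
  have hkey : minEig ρ * overlap (E ω₀) ψ ≤ minEig ρ * maxOverlap F' ψ :=
    mul_le_mul_of_nonneg_left hmem hlam0
  have hring : minEig ρ * (1 - maxOverlap F' ψ)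
      = minEig ρ - minEig ρ * maxOverlap F' ψ := by ring
  linarith [hfid, hov1, hkey, hdecomp.le, hdecomp.ge]
end
end

section
/- Let ρ be a full-rank density matrix on ℂ^d, let F be a nonempty closed set of density matrices on ℂ^d with R_F(ρ) < ∞, and let F' be a closed set of density matrices on ℂ^{d'}. Let (L, G) be a probabilistic free protocol from (F, ℂ^d) to (F', ℂ^{d'}), and let ψ ∈ ℂ^{d'} be a unit vector with |ψ⟩⟨ψ| ∉ F'. Then for every p > 0, L(ρ) ≠ p·|ψ⟩⟨ψ|. (Corollary: it is impossible to exactly transform a full-rank state into a pure resource state by any free protocol, even probabilistically.) -/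
open scoped Matrix ComplexOrder

noncomputable section

/-- The feasible set for the generalized robustness:
`{ s ≥ 0 : ∃ density σ, (ρ + sσ)/(1+s) ∈ F }`.  Its nonemptiness encodes `R_F(ρ) < ∞`. -/
def RobustSet {n : Type*} [Fintype n] (F : Set (Matrix n n ℂ)) (ρ : Matrix n n ℂ) : Set ℝ :=
  {s : ℝ | 0 ≤ s ∧ ∃ σ : Matrix n n ℂ, IsDensity σ ∧ (1 + s)⁻¹ • (ρ + s • σ) ∈ F}

/-- The generalized robustness `R_F(ρ)`. -/
noncomputable def Robustness {n : Type*} [Fintype n] (F : Set (Matrix n n ℂ))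
    (ρ : Matrix n n ℂ) : ℝ :=
  sInf (RobustSet F ρ)

section Helpers
open Matrix

lemma psd_smul_real {n : Type*} [Fintype n] {A : Matrix n n ℂ} (hA : A.PosSemidef) {c : ℝ} (hc : 0 ≤ c) :
    ((c : ℂ) • A).PosSemidef := by
  refine posSemidef_iff_dotProduct_mulVec.mpr ⟨?_, ?_⟩
  · unfold Matrix.IsHermitian
    rw [conjTranspose_smul, hA.1.eq]
    congr 1
    simp [Complex.ext_iff]
  · intro x
    rw [smul_mulVec, dotProduct_smul, smul_eq_mul]
    exact mul_nonneg (by exact Complex.zero_le_real.mpr hc) (hA.dotProduct_mulVec_nonneg x)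

lemma conj_diag_psd {n : Type*} [Fintype n] [DecidableEq n] {A : Matrix n n ℂ} (hA : A.IsHermitian) (f : n → ℝ) (hf : ∀ i, 0 ≤ f i) :
    ((hA.eigenvectorUnitary : Matrix n n ℂ) * diagonal (fun i => (f i : ℂ)) *
      star (hA.eigenvectorUnitary : Matrix n n ℂ)).PosSemidef := by
  refine (Matrix.posSemidef_diagonal_iff.mpr fun i => Complex.zero_le_real.mpr (hf i)
    ).mul_mul_conjTranspose_same _

lemma herm_sub_smul_one {n : Type*} [Fintype n] [DecidableEq n] {A : Matrix n n ℂ} (hA : A.IsHermitian) {a : ℝ}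
    (h : ∀ i, a ≤ hA.eigenvalues i) : (A - (a : ℂ) • 1).PosSemidef := by
  have hU : (hA.eigenvectorUnitary : Matrix n n ℂ) * star (hA.eigenvectorUnitary : Matrix n n ℂ) = 1 :=
    Matrix.mem_unitaryGroup_iff.mp hA.eigenvectorUnitary.2
  have key : A - (a : ℂ) • 1 =
      (hA.eigenvectorUnitary : Matrix n n ℂ) * diagonal (fun i => ((hA.eigenvalues i - a : ℝ) : ℂ)) *
        star (hA.eigenvectorUnitary : Matrix n n ℂ) := by
    have h1 : (a : ℂ) • (1 : Matrix n n ℂ) =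
        (hA.eigenvectorUnitary : Matrix n n ℂ) * ((a : ℂ) • 1) *
          star (hA.eigenvectorUnitary : Matrix n n ℂ) := by
      rw [Matrix.mul_smul, mul_one, Matrix.smul_mul, hU]
    conv_lhs => rw [hA.spectral_theorem, Unitary.conjStarAlgAut_apply, h1]
    rw [← Matrix.sub_mul, ← Matrix.mul_sub]
    congr 1
    congr 1
    rw [smul_eq_diagonal_mul, mul_one, diagonal_sub]
    congr 1
    funext i
    push_cast
    simp [Function.comp]
  rw [key]
  exact conj_diag_psd hA _ fun i => by linarith [h i]

lemma herm_smul_one_sub {n : Type*} [Fintype n] [DecidableEq n] {A : Matrix n n ℂ} (hA : A.IsHermitian) {b : ℝ}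
    (h : ∀ i, hA.eigenvalues i ≤ b) : ((b : ℂ) • 1 - A).PosSemidef := by
  have hU : (hA.eigenvectorUnitary : Matrix n n ℂ) * star (hA.eigenvectorUnitary : Matrix n n ℂ) = 1 :=
    Matrix.mem_unitaryGroup_iff.mp hA.eigenvectorUnitary.2
  have key : (b : ℂ) • 1 - A =
      (hA.eigenvectorUnitary : Matrix n n ℂ) * diagonal (fun i => ((b - hA.eigenvalues i : ℝ) : ℂ)) *
        star (hA.eigenvectorUnitary : Matrix n n ℂ) := by
    have h1 : (b : ℂ) • (1 : Matrix n n ℂ) =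
        (hA.eigenvectorUnitary : Matrix n n ℂ) * ((b : ℂ) • 1) *
          star (hA.eigenvectorUnitary : Matrix n n ℂ) := by
      rw [Matrix.mul_smul, mul_one, Matrix.smul_mul, hU]
    conv_lhs => rw [hA.spectral_theorem, Unitary.conjStarAlgAut_apply, h1]
    rw [← Matrix.sub_mul, ← Matrix.mul_sub]
    congr 1
    congr 1
    rw [smul_eq_diagonal_mul, mul_one, diagonal_sub]
    congr 1
    funext i
    push_cast
    simp [Function.comp]
  rw [key]
  exact conj_diag_psd hA _ fun i => by linarith [h i]

lemma herm_trace_eq {n : Type*} [Fintype n] [DecidableEq n] {A : Matrix n n ℂ} (hA : A.IsHermitian) :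
    A.trace = ((∑ i, hA.eigenvalues i : ℝ) : ℂ) := by
  conv_lhs => rw [hA.spectral_theorem, Unitary.conjStarAlgAut_apply]
  rw [Matrix.trace_mul_cycle, Unitary.coe_star_mul_self, one_mul, trace_diagonal]
  push_cast
  rfl

lemma vecMulVec_mulVec' {n : Type*} [Fintype n] (ψ w : n → ℂ) :
    Matrix.vecMulVec ψ (star ψ) *ᵥ w = (dotProduct (star ψ) w) • ψ := by
  funext j
  simp [Matrix.mulVec, Matrix.vecMulVec, dotProduct, Finset.mul_sum, mul_comm, mul_assoc,
    mul_left_comm]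

lemma herm_dot {n : Type*} [Fintype n] {A : Matrix n n ℂ} (hA : A.IsHermitian) (x y : n → ℂ) :
    dotProduct (star x) (A *ᵥ y) = dotProduct (star (A *ᵥ x)) y := by
  rw [star_mulVec, hA.eq, dotProduct_mulVec]

lemma psd_below_rank_one {n : Type*} [Fintype n] [DecidableEq n] {A : Matrix n n ℂ} (hA : A.PosSemidef) (ψ : n → ℂ)
    (hψ : dotProduct (star ψ) ψ = 1) {β : ℝ}
    (hle : ((β : ℂ) • Matrix.vecMulVec ψ (star ψ) - A).PosSemidef) :
    A = (dotProduct (star ψ) (A *ᵥ ψ)) • Matrix.vecMulVec ψ (star ψ) := by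
  set P := Matrix.vecMulVec ψ (star ψ) with hP
  -- step 1: A kills vectors orthogonal to ψ
  have step1 : ∀ w : n → ℂ, dotProduct (star ψ) w = 0 → A *ᵥ w = 0 := by
    intro w hw
    have h1 : ((β : ℂ) • P - A) *ᵥ w = -(A *ᵥ w) := by
      rw [Matrix.sub_mulVec, smul_mulVec, vecMulVec_mulVec', hw, zero_smul, smul_zero,
        zero_sub]
    have h2 := hle.dotProduct_mulVec_nonneg w
    rw [h1, dotProduct_neg] at h2
    have h3 := hA.dotProduct_mulVec_nonneg w
    have h4 : dotProduct (star w) (A *ᵥ w) = 0 := le_antisymm (neg_nonneg.mp h2) h3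
    exact (hA.dotProduct_mulVec_zero_iff w).mp h4
  -- step 2: ψ is an eigenvector
  set α := dotProduct (star ψ) (A *ᵥ ψ) with hα
  have step2 : A *ᵥ ψ = α • ψ := by
    set w₀ := A *ᵥ ψ - α • ψ with hw₀
    have horth : dotProduct (star ψ) w₀ = 0 := by
      rw [hw₀, dotProduct_sub, dotProduct_smul, hψ, smul_eq_mul, mul_one, ← hα, sub_self]
    have hAw₀ : A *ᵥ w₀ = 0 := step1 w₀ horth
    have hz : dotProduct (star w₀) w₀ = 0 := by
      have e1 : dotProduct (star w₀) (A *ᵥ ψ) = 0 := by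
        rw [herm_dot hA.1, hAw₀]
        simp
      have e2 : dotProduct (star w₀) ψ = 0 := by
        have := congrArg star horth
        rwa [star_zero, star_dotProduct, star_star] at this
      rw [hw₀]
      rw [dotProduct_sub, e1, dotProduct_smul, smul_eq_mul, e2, mul_zero, sub_zero]
    have : w₀ = 0 := dotProduct_star_self_eq_zero.mp hz
    rw [hw₀] at this
    exact sub_eq_zero.mp this
  -- step 3: conclude
  have hmv : ∀ v : n → ℂ, A *ᵥ v = (α • P) *ᵥ v := by
    intro v
    set c := dotProduct (star ψ) v with hc
    have horth : dotProduct (star ψ) (v - c • ψ) = 0 := by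
      rw [dotProduct_sub, dotProduct_smul, hψ, smul_eq_mul, mul_one, ← hc, sub_self]
    have h0 := step1 _ horth
    rw [Matrix.mulVec_sub, Matrix.mulVec_smul, sub_eq_zero] at h0
    rw [h0, step2, smul_mulVec, vecMulVec_mulVec', ← hc, smul_comm]
  ext i j
  have := congrFun (hmv (Pi.single j 1)) i
  simpa [Matrix.mulVec_single] using this

end Helpers

/-- **Corollary.**  It is impossible to exactly transform a full-rank state into a pure resource
state by any free protocol, even probabilistically. -/
theorem no_go_exact_purification_probabilistic {d d' : ℕ}
    (ρ : Matrix (Fin d) (Fin d) ℂ) (hρ : IsDensity ρ) (hρfull : 0 < minEig ρ)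
    (F : Set (Matrix (Fin d) (Fin d) ℂ)) (hFne : F.Nonempty) (hFcl : IsClosed F)
    (hFden : ∀ ω ∈ F, IsDensity ω)
    (hRfin : (RobustSet F ρ).Nonempty)
    (F' : Set (Matrix (Fin d') (Fin d') ℂ)) (hF'cl : IsClosed F')
    (hF'den : ∀ ω ∈ F', IsDensity ω)
    (L G : Matrix (Fin d) (Fin d) ℂ →ₗ[ℂ] Matrix (Fin d') (Fin d') ℂ)
    (hLpos : PosMap L) (hGpos : PosMap G)
    (hTP : ∀ X, (L X).trace + (G X).trace = X.trace)
    (hLfree : ∀ ω ∈ F, ∃ t : ℝ, 0 ≤ t ∧ ∃ ω' ∈ F', L ω = (t : ℂ) • ω')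
    (ψ : Fin d' → ℂ) (hψ : dotProduct (star ψ) ψ = 1)
    (hψres : Matrix.vecMulVec ψ (star ψ) ∉ F') :
    ∀ p : ℝ, 0 < p → L ρ ≠ (p : ℂ) • Matrix.vecMulVec ψ (star ψ) := by
  intro p hp hcon
  obtain ⟨s, hs0, σ, hσ, hωF⟩ := hRfin
  set P : Matrix (Fin d') (Fin d') ℂ := Matrix.vecMulVec ψ (star ψ) with hPdef
  set ω : Matrix (Fin d) (Fin d) ℂ := (1 + s)⁻¹ • (ρ + s • σ) with hωdef
  have hωden : IsDensity ω := hFden _ hωF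
  obtain ⟨t, ht0, ω', hω'F, hLω⟩ := hLfree ω hωF
  have h1s : (0 : ℝ) < 1 + s := by linarith
  have hrs : ∀ (r : ℝ) (X : Matrix (Fin d) (Fin d) ℂ), r • X = (r : ℂ) • X := by
    intro r X; ext i j; simp [Complex.real_smul]
  have hωC : ω = ((1 + s : ℝ)⁻¹ : ℂ) • (ρ + ((s : ℝ) : ℂ) • σ) := by
    rw [hωdef, hrs, hrs]; push_cast; ring_nf
  have hLωeq : L ω = ((1 + s : ℝ)⁻¹ : ℂ) • (L ρ + ((s : ℝ) : ℂ) • L σ) := by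
    rw [hωC, map_smul, map_add, map_smul]
  have hPψ : P *ᵥ ψ = ψ := by rw [hPdef, vecMulVec_mulVec', hψ, one_smul]
  have hQσ : (0 : ℂ) ≤ dotProduct (star ψ) (L σ *ᵥ ψ) := (hLpos σ hσ.1).dotProduct_mulVec_nonneg ψ
  have hQσre : 0 ≤ (dotProduct (star ψ) (L σ *ᵥ ψ)).re := (Complex.le_def.mp hQσ).1
  have hQLω : dotProduct (star ψ) (L ω *ᵥ ψ) =
      ((1 + s : ℝ)⁻¹ : ℂ) * ((p : ℂ) + ((s : ℝ) : ℂ) * dotProduct (star ψ) (L σ *ᵥ ψ)) := by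
    rw [hLωeq]
    rw [Matrix.smul_mulVec, Matrix.add_mulVec, Matrix.smul_mulVec,
      dotProduct_smul, dotProduct_add, dotProduct_smul, hcon,
      Matrix.smul_mulVec, dotProduct_smul, hPψ, hψ]
    simp [mul_comm]
  have htpos : 0 < t := by
    rcases ht0.lt_or_eq with h | h
    · exact h
    · exfalso
      have hLω0 : L ω = 0 := by rw [hLω, ← h]; simp
      have h0 : dotProduct (star ψ) (L ω *ᵥ ψ) = 0 := by
        rw [hLω0]; simp
      rw [hQLω] at h0
      have hinv : ((1 + s : ℝ)⁻¹ : ℂ) ≠ 0 := by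
        exact_mod_cast (inv_pos.mpr h1s).ne'
      have hZ := (mul_eq_zero.mp h0).resolve_left hinv
      have hre := congrArg Complex.re hZ
      simp only [Complex.add_re, Complex.mul_re, Complex.ofReal_re, Complex.ofReal_im,
        Complex.zero_re, zero_mul, sub_zero] at hre
      nlinarith
  -- spectral bounds
  set c : ℝ := minEig ρ with hcdef
  have hherm : ρ.IsHermitian := hρ.1.1
  have hminEq : minEig ρ = ⨅ i, hherm.eigenvalues i := by
    rw [minEig, dif_pos hherm]
  have hcle : ∀ i, c ≤ hherm.eigenvalues i := by
    intro i
    rw [hcdef, hminEq]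
    exact ciInf_le (Set.Finite.bddBelow (Set.finite_range _)) i
  have hρc : (ρ - (c : ℂ) • 1).PosSemidef := herm_sub_smul_one hherm hcle
  have hωh : ω.IsHermitian := hωden.1.1
  have hωeig1 : ∀ i, hωh.eigenvalues i ≤ 1 := by
    intro i
    have hsum : ((∑ j, hωh.eigenvalues j : ℝ) : ℂ) = 1 := by
      rw [← herm_trace_eq hωh, hωden.2]
    have hsum' : (∑ j, hωh.eigenvalues j : ℝ) = 1 := by exact_mod_cast hsum
    calc hωh.eigenvalues i ≤ ∑ j, hωh.eigenvalues j :=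
          Finset.single_le_sum (fun j _ => hωden.1.eigenvalues_nonneg j) (Finset.mem_univ i)
      _ = 1 := hsum'
  have hω1 : (((1 : ℝ) : ℂ) • 1 - ω).PosSemidef := herm_smul_one_sub hωh hωeig1
  have hρω : (ρ - (c : ℂ) • ω).PosSemidef := by
    have h := hρc.add (psd_smul_real hω1 hρfull.le)
    have e : ρ - (c : ℂ) • ω = (ρ - (c : ℂ) • 1) + (c : ℂ) • (((1 : ℝ) : ℂ) • 1 - ω) := by
      push_cast
      module
    rwa [← e] at h
  have hct : (0 : ℝ) < c * t := mul_pos hρfull htpos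
  have hkey : ((p : ℂ) • P - ((c * t : ℝ) : ℂ) • ω').PosSemidef := by
    have hps := hLpos _ hρω
    have e : L (ρ - (c : ℂ) • ω) = (p : ℂ) • P - ((c * t : ℝ) : ℂ) • ω' := by
      rw [map_sub, map_smul, hcon, hLω, smul_smul]
      push_cast
      ring_nf
    rwa [e] at hps
  have hA : (((c * t : ℝ) : ℂ) • ω').PosSemidef := psd_smul_real (hF'den ω' hω'F).1 hct.le
  have hmain := psd_below_rank_one hA ψ hψ hkey
  have htrP : P.trace = 1 := by
    have : P.trace = dotProduct (star ψ) ψ := by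
      simp [hPdef, Matrix.trace, Matrix.diag, Matrix.vecMulVec, dotProduct, mul_comm]
    rw [this, hψ]
  set α : ℂ := dotProduct (star ψ) ((((c * t : ℝ) : ℂ) • ω') *ᵥ ψ) with hαdef
  have htr1 : ((((c * t : ℝ) : ℂ) • ω')).trace = ((c * t : ℝ) : ℂ) := by
    rw [Matrix.trace_smul, (hF'den ω' hω'F).2, smul_eq_mul, mul_one]
  have htr2 : ((((c * t : ℝ) : ℂ) • ω')).trace = α := by
    rw [hmain, Matrix.trace_smul, htrP, smul_eq_mul, mul_one]
  have hαval : α = ((c * t : ℝ) : ℂ) := by rw [← htr2, htr1]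
  have hfinal : ω' = P := by
    have h1 : ((c * t : ℝ) : ℂ) • ω' = ((c * t : ℝ) : ℂ) • P := by
      rw [hmain, hαval]
    have hne : ((c * t : ℝ) : ℂ) ≠ 0 := by exact_mod_cast hct.ne'
    exact smul_right_injective _ hne h1
  exact hψres (hfinal ▸ hω'F)
end
end

section
/- Let |T⟩ := (|0⟩ + e^{iπ/4}|1⟩)/√2 ∈ ℂ². Let ρ̂ be a full-rank density matrix on ℂ^D, let F be a nonempty closed set of density matrices on ℂ^D with R_F(ρ̂) < ∞, let n, m ≥ 1, and let F_n be a closed set of density matrices on ℂ^{D^n} such that ω^{⊗n} ∈ F_n for every ω ∈ F. Let F'_m be a set of density matrices on ℂ^{2^m} ≅ (ℂ²)^{⊗m} such that sup_{ω ∈ F'_m} ⟨T^{⊗m}, ω T^{⊗m}⟩ ≤ (4 − 2√2)^{−m}. Let (L, G) be a probabilistic free protocol from (F_n, ℂ^{D^n}) to (F'_m, ℂ^{2^m}) with p := Tr(L(ρ̂^{⊗n})) > 0 and output τ := L(ρ̂^{⊗n})/p. Suppose for each i = 1, …, m, Tr(τ · (I_2^{⊗(i−1)} ⊗ |T⟩⟨T|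 ⊗ I_2^{⊗(m−i)})) ≥ 1 − ε. Then ε/p ≥ λ_min(ρ̂)^n · (1 − (4 − 2√2)^{−m}) / (m · (1 + R_F(ρ̂))^n); equivalently, for ε > 0, ((1 + R_F(ρ̂))/λ_min(ρ̂))^n ≥ ((4 − 2√2)^m − 1)·p / ((4 − 2√2)^m · m · ε). (Theorem 3: lower bound on the overhead of magic state distillation.) -/
open scoped Matrix ComplexOrder

noncomputable section

/-- The `n`-fold Kronecker power of a `d × d` matrix, realized on the index type
`Fin n → Fin d` (canonically identifying `ℂ^{d^n} ≅ (ℂ^d)^{⊗n}`). -/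
noncomputable def kronPow {d : ℕ} (A : Matrix (Fin d) (Fin d) ℂ) (n : ℕ) :
    Matrix (Fin n → Fin d) (Fin n → Fin d) ℂ :=
  Matrix.of fun x y => ∏ i, A (x i) (y i)

/-- The magic state `|T⟩ = (|0⟩ + e^{iπ/4}|1⟩)/√2`. -/
noncomputable def Tket : Fin 2 → ℂ :=
  ![(Real.sqrt 2 : ℂ)⁻¹, Complex.exp (Complex.I * (Real.pi / 4)) * (Real.sqrt 2 : ℂ)⁻¹]

/-- `|T⟩^{⊗m}` as a vector on `(ℂ²)^{⊗m}` (index type `Fin m → Fin 2`). -/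
noncomputable def TketPow (m : ℕ) : (Fin m → Fin 2) → ℂ :=
  fun x => ∏ i, Tket (x i)

/-- `I ⊗ ⋯ ⊗ |T⟩⟨T| ⊗ ⋯ ⊗ I`, with `|T⟩⟨T|` in the `i`-th slot. -/
noncomputable def margTProj (m : ℕ) (i : Fin m) :
    Matrix (Fin m → Fin 2) (Fin m → Fin 2) ℂ :=
  Matrix.of fun x y => (Tket (x i) * star (Tket (y i))) *
    ∏ j ∈ Finset.univ.erase i, (if x j = y j then (1 : ℂ) else 0)

namespace MSD

/-- tensor product of a family of d×d matrices on the index type `Fin k → Fin d`. -/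
def tens {k d : ℕ} (A : Fin k → Matrix (Fin d) (Fin d) ℂ) :
    Matrix (Fin k → Fin d) (Fin k → Fin d) ℂ :=
  Matrix.of fun x y => ∏ i, A i (x i) (y i)

lemma tens_apply {k d : ℕ} (A : Fin k → Matrix (Fin d) (Fin d) ℂ) (x y) :
    tens A x y = ∏ i, A i (x i) (y i) := rfl

lemma tens_mul {k d : ℕ} (A B : Fin k → Matrix (Fin d) (Fin d) ℂ) :
    tens A * tens B = tens (fun i => A i * B i) := by
  ext x y
  simp only [Matrix.mul_apply, tens_apply, ← Finset.prod_mul_distrib]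
  rw [Fintype.prod_sum]

lemma tens_conjTranspose {k d : ℕ} (A : Fin k → Matrix (Fin d) (Fin d) ℂ) :
    (tens A)ᴴ = tens (fun i => (A i)ᴴ) := by
  ext x y
  simp [tens_apply, Matrix.conjTranspose_apply]

lemma tens_one {k d : ℕ} : tens (fun _ : Fin k => (1 : Matrix (Fin d) (Fin d) ℂ)) = 1 := by
  ext x y
  simp only [tens_apply, Matrix.one_apply]
  rw [Finset.prod_boole]
  simp [funext_iff]

open scoped MatrixOrder in
lemma psd_exists_mul_self {N : Type*} [Fintype N] [DecidableEq N] {A : Matrix N N ℂ}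
    (h : A.PosSemidef) : ∃ B : Matrix N N ℂ, A = Bᴴ * B := by
  obtain ⟨B, hB⟩ := CStarAlgebra.nonneg_iff_eq_star_mul_self.mp h.nonneg
  exact ⟨B, hB⟩

lemma tens_posSemidef {k d : ℕ} (A : Fin k → Matrix (Fin d) (Fin d) ℂ)
    (h : ∀ i, (A i).PosSemidef) : (tens A).PosSemidef := by
  choose B hB using fun i => (psd_exists_mul_self (h i))
  have hA : A = fun i => (B i)ᴴ * B i := funext hB
  have : tens A = (tens B)ᴴ * tens B := by
    rw [tens_conjTranspose, tens_mul, ← hA]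
  exact this ▸ Matrix.posSemidef_conjTranspose_mul_self _


variable {N : Type*} [Fintype N] [DecidableEq N]

lemma psd_trace_nonneg {M : Matrix N N ℂ} (hM : M.PosSemidef) : 0 ≤ M.trace := by
  refine Finset.sum_nonneg fun i _ => ?_
  have h := hM.dotProduct_mulVec_nonneg (Pi.single i 1)
  have e : star (Pi.single i 1 : N → ℂ) ⬝ᵥ M *ᵥ (Pi.single i 1) = M i i := by
    simp [dotProduct, Matrix.mulVec, Pi.single_apply, apply_ite,
      Finset.sum_ite_eq', mul_comm]
  rwa [e] at h

lemma trace_mul_psd_nonneg {A B : Matrix N N ℂ} (hA : A.PosSemidef) (hB : B.PosSemidef) :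
    0 ≤ (A * B).trace := by
  obtain ⟨C, hC⟩ := psd_exists_mul_self hA
  rw [hC, ← Matrix.trace_mul_cycle]
  exact psd_trace_nonneg (hB.mul_mul_conjTranspose_same C)

lemma cpos_re {z : ℂ} (h : 0 ≤ z) : 0 ≤ z.re := by
  rw [Complex.le_def] at h; exact h.1

lemma trace_mul_psd_re_nonneg {A B : Matrix N N ℂ} (hA : A.PosSemidef) (hB : B.PosSemidef) :
    0 ≤ ((A * B).trace).re := cpos_re (trace_mul_psd_nonneg hA hB)

lemma herm_sub_smul_one {A : Matrix N N ℂ} (hA : A.IsHermitian) (c : ℝ) :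
    A - (c : ℂ) • 1 = (hA.eigenvectorUnitary : Matrix N N ℂ) *
      Matrix.diagonal (fun i => ((hA.eigenvalues i - c : ℝ) : ℂ)) *
      star (hA.eigenvectorUnitary : Matrix N N ℂ) := by
  set U : Matrix N N ℂ := (hA.eigenvectorUnitary : Matrix N N ℂ) with hUdef
  have hU : U * star U = 1 := (Matrix.mem_unitaryGroup_iff).mp hA.eigenvectorUnitary.2
  have h1 : (c : ℂ) • (1 : Matrix N N ℂ) = U * ((c : ℂ) • 1) * star U := by
    rw [Matrix.mul_smul, Matrix.smul_mul, mul_one, hU]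
  conv_lhs => rw [hA.spectral_theorem, Unitary.conjStarAlgAut_apply, h1]
  rw [← Matrix.sub_mul, ← Matrix.mul_sub]
  congr 2
  ext i j
  rcases eq_or_ne i j with rfl | hij
  · simp [Matrix.diagonal_apply, Matrix.one_apply, RCLike.ofReal, Complex.ofReal_sub]
  · simp [Matrix.diagonal_apply_ne _ hij, Matrix.one_apply_ne hij]

lemma sub_smul_one_psd {A : Matrix N N ℂ} (hA : A.IsHermitian) {c : ℝ}
    (h : ∀ i, c ≤ hA.eigenvalues i) : (A - (c : ℂ) • 1).PosSemidef := by
  rw [herm_sub_smul_one hA c, Matrix.star_eq_conjTranspose]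
  exact (Matrix.posSemidef_diagonal_iff.mpr fun i => by
    rw [Complex.zero_le_real]; linarith [h i]).mul_mul_conjTranspose_same _

lemma smul_one_sub_psd {A : Matrix N N ℂ} (hA : A.IsHermitian) {c : ℝ}
    (h : ∀ i, hA.eigenvalues i ≤ c) : ((c : ℂ) • 1 - A).PosSemidef := by
  have : (c : ℂ) • 1 - A = - (A - (c : ℂ) • 1) := (neg_sub _ _).symm
  rw [this, herm_sub_smul_one hA c, Matrix.star_eq_conjTranspose, ← Matrix.neg_mul,
    ← Matrix.mul_neg, Matrix.diagonal_neg]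
  exact (Matrix.posSemidef_diagonal_iff.mpr fun i => by
    rw [← Complex.ofReal_neg, Complex.zero_le_real]; linarith [h i]).mul_mul_conjTranspose_same _

lemma density_eigen_sum {σ : Matrix N N ℂ} (hσ : IsDensity σ) :
    ∑ i, (hσ.1.1).eigenvalues i = 1 := by
  have hH : σ.IsHermitian := hσ.1.1
  set U : Matrix N N ℂ := (hH.eigenvectorUnitary : Matrix N N ℂ) with hUdef
  have hU : star U * U = 1 := (Matrix.mem_unitaryGroup_iff').mp hH.eigenvectorUnitary.2
  have htr : σ.trace = ∑ i, ((hH.eigenvalues i : ℝ) : ℂ) := by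
    conv_lhs => rw [hH.spectral_theorem]
    rw [Unitary.conjStarAlgAut_apply, Matrix.trace_mul_cycle, hU, one_mul, Matrix.trace_diagonal]
    simp [RCLike.ofReal]
  rw [hσ.2] at htr
  have := htr.symm
  rw [← Complex.ofReal_sum] at this
  exact_mod_cast this

lemma density_one_sub_psd {σ : Matrix N N ℂ} (hσ : IsDensity σ) :
    ((1 : Matrix N N ℂ) - σ).PosSemidef := by
  have h := smul_one_sub_psd hσ.1.1 (c := 1) fun i => by
    have hs := density_eigen_sum hσ
    have := Finset.single_le_sum (f := fun j => (hσ.1.1).eigenvalues j)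
      (fun j _ => hσ.1.eigenvalues_nonneg j) (Finset.mem_univ i)
    linarith
  simpa using h

lemma minEig_le {A : Matrix N N ℂ} (hA : A.IsHermitian) (i : N) :
    minEig A ≤ hA.eigenvalues i := by
  rw [minEig, dif_pos hA]
  exact ciInf_le (Set.Finite.bddBelow (Set.finite_range _)) i

lemma sub_minEig_smul_one_psd {A : Matrix N N ℂ} (hA : A.IsHermitian) :
    (A - (minEig A : ℂ) • 1).PosSemidef :=
  sub_smul_one_psd hA (minEig_le hA)

lemma smul_psd {A : Matrix N N ℂ} {r : ℝ} (hr : 0 ≤ r) (hA : A.PosSemidef) :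
    ((r : ℂ) • A).PosSemidef := by
  refine Matrix.PosSemidef.of_dotProduct_mulVec_nonneg ?_ ?_
  · rw [Matrix.IsHermitian, Matrix.conjTranspose_smul, hA.1.eq]
    congr 1
    simp
  · intro x
    rw [Matrix.smul_mulVec, dotProduct_smul, smul_eq_mul]
    exact mul_nonneg (by rw [Complex.zero_le_real]; exact hr) (hA.dotProduct_mulVec_nonneg x)

/-- `ρ ≥ λ_min(ρ) σ` for any density `σ`. -/
lemma sub_smul_density_psd {A σ : Matrix N N ℂ} (hA : A.IsHermitian) (hσ : IsDensity σ)
    (hpos : 0 ≤ minEig A) : (A - (minEig A : ℂ) • σ).PosSemidef := by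
  have h1 := sub_minEig_smul_one_psd hA
  have h2 := smul_psd hpos (density_one_sub_psd hσ)
  have : A - (minEig A : ℂ) • σ
      = (A - (minEig A : ℂ) • 1) + (minEig A : ℂ) • ((1 : Matrix N N ℂ) - σ) := by
    rw [smul_sub]; abel
  rw [this]
  exact h1.add h2


lemma psd_sum {N : Type*} [Fintype N] [DecidableEq N] {ι : Type*} (s : Finset ι)
    (f : ι → Matrix N N ℂ) (h : ∀ i ∈ s, (f i).PosSemidef) :
    (∑ i ∈ s, f i).PosSemidef := by
  classical
  induction s using Finset.induction with
  | empty => simpa using Matrix.PosSemidef.zero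
  | insert a s hx ih =>
    rw [Finset.sum_insert hx]
    exact (h _ (Finset.mem_insert_self _ _)).add
      (ih fun i hi => h i (Finset.mem_insert_of_mem hi))

lemma tens_update_apply {k d : ℕ} (A : Fin k → Matrix (Fin d) (Fin d) ℂ) (i : Fin k)
    (Z : Matrix (Fin d) (Fin d) ℂ) (x y : Fin k → Fin d) :
    tens (Function.update A i Z) x y =
      Z (x i) (y i) * ∏ j ∈ Finset.univ.erase i, A j (x j) (y j) := by
  rw [tens_apply, ← Finset.mul_prod_erase Finset.univ _ (Finset.mem_univ i),
    Function.update_self]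
  congr 1
  exact Finset.prod_congr rfl fun j hj =>
    by rw [Function.update_of_ne (Finset.ne_of_mem_erase hj)]

lemma tens_update_sub {k d : ℕ} (A : Fin k → Matrix (Fin d) (Fin d) ℂ) (i : Fin k)
    (X Y : Matrix (Fin d) (Fin d) ℂ) :
    tens (Function.update A i (X - Y)) =
      tens (Function.update A i X) - tens (Function.update A i Y) := by
  ext x y
  simp [tens_update_apply, Matrix.sub_apply, sub_mul]

/-- monotonicity of tensor powers: if `0 ≤ A ≤ B` then `A^{⊗k} ≤ B^{⊗k}`. -/
lemma tens_const_sub_psd {d : ℕ} {A B : Matrix (Fin d) (Fin d) ℂ}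
    (hA : A.PosSemidef) (hBA : (B - A).PosSemidef) (k : ℕ) :
    (tens (fun _ : Fin k => B) - tens (fun _ : Fin k => A)).PosSemidef := by
  have hB : B.PosSemidef := by simpa using hBA.add hA
  set Fm : ℕ → Matrix (Fin k → Fin d) (Fin k → Fin d) ℂ :=
    fun t => tens (fun j : Fin k => if (j : ℕ) < t then A else B) with hFm
  have h0 : Fm 0 = tens (fun _ : Fin k => B) := by simp [hFm]
  have hk : Fm k = tens (fun _ : Fin k => A) :=
    congrArg tens (funext fun j => if_pos j.is_lt)
  have key : ∀ t ∈ Finset.range k, (Fm t - Fm (t + 1)).PosSemidef := by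
    intro t ht
    have htk : t < k := Finset.mem_range.mp ht
    set i : Fin k := ⟨t, htk⟩
    set base : Fin k → Matrix (Fin d) (Fin d) ℂ :=
      fun j => if (j : ℕ) < t then A else B with hbase
    have e1 : Fm t = tens (Function.update base i B) := by
      refine congrArg tens (funext fun j => ?_)
      rcases eq_or_ne j i with rfl | hj
      · simp [hbase, Function.update_self, i]
      · rw [Function.update_of_ne hj]
    have e2 : Fm (t + 1) = tens (Function.update base i A) := by
      refine congrArg tens (funext fun j => ?_)
      rcases eq_or_ne j i with rfl | hj
      · simp [Function.update_self, Nat.lt_succ_self, i]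
      · rw [Function.update_of_ne hj]
        have : (j : ℕ) ≠ t := fun h => hj (Fin.ext h)
        simp only [hbase]
        by_cases h : (j : ℕ) < t
        · simp [h, Nat.lt_succ_of_lt h]
        · have : ¬ (j : ℕ) < t + 1 := by omega
          simp [h, this]
    rw [e1, e2, ← tens_update_sub]
    refine tens_posSemidef _ fun j => ?_
    rcases eq_or_ne j i with rfl | hj
    · simpa [Function.update_self] using hBA
    · rw [Function.update_of_ne hj]
      simp only [hbase]
      split <;> [exact hA; exact hB]
  have hsum := Finset.sum_range_sub' Fm k
  have : tens (fun _ : Fin k => B) - tens (fun _ : Fin k => A)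
      = ∑ t ∈ Finset.range k, (Fm t - Fm (t + 1)) := by
    rw [hsum, h0, hk]
  rw [this]
  exact psd_sum _ _ key

lemma kronPow_eq_tens {d : ℕ} (A : Matrix (Fin d) (Fin d) ℂ) (k : ℕ) :
    kronPow A k = tens (fun _ : Fin k => A) := rfl

lemma kronPow_smul {d : ℕ} (c : ℂ) (A : Matrix (Fin d) (Fin d) ℂ) (k : ℕ) :
    kronPow (c • A) k = c ^ k • kronPow A k := by
  ext x y
  simp only [kronPow, Matrix.of_apply, Matrix.smul_apply, smul_eq_mul]
  rw [Finset.prod_mul_distrib, Finset.prod_const]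
  simp

lemma trace_kronPow {d : ℕ} (A : Matrix (Fin d) (Fin d) ℂ) (k : ℕ) :
    (kronPow A k).trace = A.trace ^ k := by
  simp only [Matrix.trace, Matrix.diag, kronPow, Matrix.of_apply]
  rw [Fintype.sum_pow]

/-! ### The magic-state specific computations -/

def Tmat : Matrix (Fin 2) (Fin 2) ℂ := Matrix.of fun a b => Tket a * star (Tket b)

def d0r : Fin 2 → ℝ := fun a => if a = 0 then 1 else 0

def E00 : Matrix (Fin 2) (Fin 2) ℂ := Matrix.diagonal (fun a => ((d0r a : ℝ) : ℂ))

def Umat : Matrix (Fin 2) (Fin 2) ℂ :=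
  Matrix.of ![![(Real.sqrt 2 : ℂ)⁻¹, (Real.sqrt 2 : ℂ)⁻¹],
    ![Complex.exp (Complex.I * (Real.pi / 4)) * (Real.sqrt 2 : ℂ)⁻¹,
      -(Complex.exp (Complex.I * (Real.pi / 4)) * (Real.sqrt 2 : ℂ)⁻¹)]]

lemma estar : star (Complex.exp (Complex.I * (Real.pi / 4)))
    = Complex.exp (-(Complex.I * (Real.pi / 4))) := by
  rw [Complex.star_def, ← Complex.exp_conj]
  congr 1
  have h4 : ((Real.pi / 4 : ℝ) : ℂ) = (Real.pi : ℂ) / 4 := by push_cast; ring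
  rw [show Complex.I * ((Real.pi : ℂ) / 4) = Complex.I * (((Real.pi / 4 : ℝ)) : ℂ) by rw [h4]]
  rw [map_mul, Complex.conj_I, Complex.conj_ofReal]
  ring

lemma ee' : Complex.exp (-(Complex.I * (Real.pi / 4))) * Complex.exp (Complex.I * (Real.pi / 4))
    = 1 := by
  rw [← Complex.exp_add]
  simp

lemma rt2_mul : ((Real.sqrt 2 : ℂ))⁻¹ * ((Real.sqrt 2 : ℂ))⁻¹ = 2⁻¹ := by
  rw [← mul_inv, ← Complex.ofReal_mul, Real.mul_self_sqrt (by norm_num)]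
  norm_num

lemma star_rt2 : star ((Real.sqrt 2 : ℂ))⁻¹ = ((Real.sqrt 2 : ℂ))⁻¹ := by
  rw [star_inv₀, Complex.star_def, Complex.conj_ofReal]

lemma Umat_col0 (a : Fin 2) : Umat a 0 = Tket a := by
  fin_cases a <;> simp [Umat, Tket]

lemma one_fin_two : (1 : Matrix (Fin 2) (Fin 2) ℂ) = Matrix.of ![![1,0],![0,1]] := by
  ext a b
  fin_cases a <;> fin_cases b <;> simp [Matrix.one_apply]

lemma Umat_mul_conjTranspose : Umat * Umatᴴ = 1 := by
  rw [one_fin_two]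
  ext a b
  fin_cases a <;> fin_cases b <;>
    simp only [Umat, Matrix.mul_apply, Fin.sum_univ_two, Matrix.conjTranspose_apply,
      Matrix.of_apply, Matrix.cons_val', Matrix.cons_val_zero, Matrix.cons_val_one,
      Matrix.head_cons, Matrix.head_fin_const, Matrix.empty_val', Matrix.cons_val_fin_one,
      star_mul', star_neg, star_rt2, estar, Fin.zero_eta, Fin.mk_one]
  · linear_combination 2 * rt2_mul
  · ring
  · ring
  · linear_combination (2 * ((Real.sqrt 2 : ℂ))⁻¹ * ((Real.sqrt 2 : ℂ))⁻¹) * ee' + 2 * rt2_mul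

lemma conjTranspose_mul_Umat : Umatᴴ * Umat = 1 := by
  rw [one_fin_two]
  ext a b
  fin_cases a <;> fin_cases b <;>
    simp only [Umat, Matrix.mul_apply, Fin.sum_univ_two, Matrix.conjTranspose_apply,
      Matrix.of_apply, Matrix.cons_val', Matrix.cons_val_zero, Matrix.cons_val_one,
      Matrix.head_cons, Matrix.head_fin_const, Matrix.empty_val', Matrix.cons_val_fin_one,
      star_mul', star_neg, star_rt2, estar, Fin.zero_eta, Fin.mk_one]
  · linear_combination (((Real.sqrt 2 : ℂ))⁻¹ * ((Real.sqrt 2 : ℂ))⁻¹) * ee' + 2 * rt2_mul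
  · linear_combination (-(((Real.sqrt 2 : ℂ))⁻¹ * ((Real.sqrt 2 : ℂ))⁻¹)) * ee'
  · linear_combination (-(((Real.sqrt 2 : ℂ))⁻¹ * ((Real.sqrt 2 : ℂ))⁻¹)) * ee'
  · linear_combination (((Real.sqrt 2 : ℂ))⁻¹ * ((Real.sqrt 2 : ℂ))⁻¹) * ee' + 2 * rt2_mul

lemma E00_explicit : E00 = Matrix.of ![![1, 0], ![0, 0]] := by
  ext a b
  fin_cases a <;> fin_cases b <;> simp [E00, d0r, Matrix.diagonal_apply, Matrix.one_apply]

lemma Umat_E00 : Umat * E00 * Umatᴴ = Tmat := by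
  rw [E00_explicit]
  ext a b
  fin_cases a <;> fin_cases b <;>
    simp [Umat, Tmat, Tket, Matrix.mul_apply, Fin.sum_univ_two,
      Matrix.conjTranspose_apply, star_mul', star_rt2, estar] <;>
    ring

lemma tens_diagonal {k d : ℕ} (ds : Fin k → Fin d → ℂ) :
    tens (fun i => Matrix.diagonal (ds i)) = Matrix.diagonal (fun x => ∏ i, ds i (x i)) := by
  ext x y
  rcases eq_or_ne x y with rfl | hxy
  · simp [tens_apply, Matrix.diagonal_apply_eq]
  · obtain ⟨j, hj⟩ := Function.ne_iff.mp hxy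
    rw [Matrix.diagonal_apply_ne _ hxy, tens_apply]
    exact Finset.prod_eq_zero (Finset.mem_univ j) (by rw [Matrix.diagonal_apply_ne _ hj])

def bigU (m : ℕ) : Matrix (Fin m → Fin 2) (Fin m → Fin 2) ℂ := tens (fun _ : Fin m => Umat)

def PiT (m : ℕ) : Matrix (Fin m → Fin 2) (Fin m → Fin 2) ℂ := tens (fun _ : Fin m => Tmat)

def Ei (m : ℕ) (i : Fin m) : Matrix (Fin m → Fin 2) (Fin m → Fin 2) ℂ :=
  tens (fun j => if j = i then E00 else 1)

def Eall (m : ℕ) : Matrix (Fin m → Fin 2) (Fin m → Fin 2) ℂ := tens (fun _ : Fin m => E00)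

lemma bigU_unitary (m : ℕ) : bigU m * (bigU m)ᴴ = 1 := by
  rw [bigU, tens_conjTranspose, tens_mul]
  rw [show (fun _ : Fin m => Umat * Umatᴴ) = fun _ : Fin m => (1 : Matrix (Fin 2) (Fin 2) ℂ)
    from funext fun _ => Umat_mul_conjTranspose]
  exact tens_one

lemma conj_bigU {m : ℕ} (A : Fin m → Matrix (Fin 2) (Fin 2) ℂ) :
    bigU m * tens A * (bigU m)ᴴ = tens (fun i => Umat * A i * Umatᴴ) := by
  rw [bigU, tens_conjTranspose, tens_mul, tens_mul]

lemma margTProj_eq (m : ℕ) (i : Fin m) :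
    margTProj m i = tens (fun j => if j = i then Tmat else 1) := by
  have h : (fun j : Fin m => if j = i then Tmat else 1)
      = Function.update (fun _ : Fin m => (1 : Matrix (Fin 2) (Fin 2) ℂ)) i Tmat := by
    funext j
    rcases eq_or_ne j i with rfl | hj
    · simp
    · simp [Function.update_of_ne hj, hj]
  rw [h]
  ext x y
  rw [tens_update_apply]
  simp [margTProj, Tmat, Matrix.one_apply]

lemma conj_Ei {m : ℕ} (i : Fin m) : bigU m * Ei m i * (bigU m)ᴴ = margTProj m i := by
  rw [Ei, conj_bigU, margTProj_eq]
  refine congrArg tens (funext fun j => ?_)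
  rcases eq_or_ne j i with rfl | hj
  · simp [Umat_E00]
  · simp [hj, Umat_mul_conjTranspose]

lemma conj_Eall (m : ℕ) : bigU m * Eall m * (bigU m)ᴴ = PiT m := by
  rw [Eall, conj_bigU, PiT]
  exact congrArg tens (funext fun j => Umat_E00)

lemma Ei_diag {m : ℕ} (i : Fin m) :
    Ei m i = Matrix.diagonal (fun x => ((d0r (x i) : ℝ) : ℂ)) := by
  rw [Ei]
  have h : (fun j : Fin m => if j = i then E00 else 1)
      = fun j => Matrix.diagonal (fun a : Fin 2 => if j = i then ((d0r a : ℝ) : ℂ) else 1) := by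
    funext j
    rcases eq_or_ne j i with rfl | hj
    · simp [E00]
    · simp [hj]
  rw [h, tens_diagonal]
  congr 1
  funext x
  simp

lemma Eall_diag (m : ℕ) :
    Eall m = Matrix.diagonal (fun x => ((∏ j, d0r (x j) : ℝ) : ℂ)) := by
  rw [Eall, show (fun _ : Fin m => E00)
    = fun _ : Fin m => Matrix.diagonal (fun a : Fin 2 => ((d0r a : ℝ) : ℂ)) from rfl,
    tens_diagonal]
  congr 1
  funext x
  push_cast
  rfl

lemma diag_combo {m : ℕ} (c : ℝ) (f1 : (Fin m → Fin 2) → ℂ) (f2 : Fin m → (Fin m → Fin 2) → ℂ) :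
    (c : ℂ) • (1 : Matrix (Fin m → Fin 2) (Fin m → Fin 2) ℂ)
        + Matrix.diagonal f1 - ∑ i, Matrix.diagonal (f2 i)
      = Matrix.diagonal (fun x => (c : ℂ) + f1 x - ∑ i, f2 i x) := by
  ext x y
  rcases eq_or_ne x y with rfl | hxy
  · simp [Matrix.sum_apply, Matrix.one_apply]
  · simp [Matrix.sum_apply, Matrix.one_apply_ne hxy, Matrix.diagonal_apply_ne _ hxy]

lemma d0r_nonneg (a : Fin 2) : 0 ≤ d0r a := by
  rw [d0r]; split <;> norm_num

lemma d0r_le_one (a : Fin 2) : d0r a ≤ 1 := by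
  rw [d0r]; split <;> norm_num

lemma N_psd (m : ℕ) :
    (((m : ℂ) - 1) • 1 + PiT m - ∑ i, margTProj m i).PosSemidef := by
  have hg : ∀ x : Fin m → Fin 2,
      0 ≤ ((m : ℝ) - 1) + ∏ j, d0r (x j) - ∑ i, d0r (x i) := by
    intro x
    by_cases hx : ∀ j, x j = 0
    · have h1 : ∀ j, d0r (x j) = 1 := fun j => by rw [hx j]; rfl
      simp [h1, Finset.prod_congr rfl fun j _ => h1 j, Finset.sum_congr rfl fun j _ => h1 j]
    · push_neg at hx
      obtain ⟨j0, hj0⟩ := hx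
      have hprod : ∏ j, d0r (x j) = 0 :=
        Finset.prod_eq_zero (Finset.mem_univ j0) (by rw [d0r]; simp [hj0])
      have hsum : ∑ i, d0r (x i) ≤ (m : ℝ) - 1 := by
        rw [← Finset.add_sum_erase _ _ (Finset.mem_univ j0),
          show d0r (x j0) = 0 by rw [d0r]; simp [hj0], zero_add]
        calc ∑ i ∈ Finset.univ.erase j0, d0r (x i)
            ≤ ∑ _i ∈ Finset.univ.erase j0, (1 : ℝ) :=
              Finset.sum_le_sum fun i _ => d0r_le_one (x i)
          _ = (m : ℝ) - 1 := by
              rw [Finset.sum_const, Finset.card_erase_of_mem (Finset.mem_univ j0),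
                Finset.card_univ, Fintype.card_fin, nsmul_eq_mul, mul_one,
                Nat.cast_sub j0.pos]
              simp
      linarith
  have hD : ((((m : ℝ) - 1 : ℝ) : ℂ) • 1 + Eall m - ∑ i, Ei m i).PosSemidef := by
    rw [Eall_diag, show (fun i : Fin m => Ei m i) = fun i =>
      Matrix.diagonal (fun x => ((d0r (x i) : ℝ) : ℂ)) from funext fun i => Ei_diag i,
      diag_combo]
    refine Matrix.posSemidef_diagonal_iff.mpr fun x => ?_
    have : ((((m : ℝ) - 1) : ℝ) : ℂ) + ((∏ j, d0r (x j) : ℝ) : ℂ) - ∑ i, ((d0r (x i) : ℝ) : ℂ)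
        = ((((m : ℝ) - 1) + ∏ j, d0r (x j) - ∑ i, d0r (x i) : ℝ) : ℂ) := by
      push_cast
      ring
    rw [this, Complex.zero_le_real]
    exact hg x
  have expand : bigU m * ((((m : ℝ) - 1 : ℝ) : ℂ) • 1 + Eall m - ∑ i, Ei m i) * (bigU m)ᴴ
      = ((m : ℂ) - 1) • 1 + PiT m - ∑ i, margTProj m i := by
    rw [Matrix.mul_sub, Matrix.sub_mul, Matrix.mul_add, Matrix.add_mul,
      Matrix.mul_smul, Matrix.smul_mul, mul_one, bigU_unitary, conj_Eall,
      Finset.mul_sum, Finset.sum_mul]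
    simp only [conj_Ei]
    have hc : ((((m : ℝ) - 1 : ℝ)) : ℂ) = (m : ℂ) - 1 := by push_cast; ring
    rw [hc]
  rw [← expand]
  exact hD.mul_mul_conjTranspose_same (bigU m)

lemma one_sub_PiT_psd (m : ℕ) :
    ((1 : Matrix (Fin m → Fin 2) (Fin m → Fin 2) ℂ) - PiT m).PosSemidef := by
  have hD : ((1 : Matrix (Fin m → Fin 2) (Fin m → Fin 2) ℂ) - Eall m).PosSemidef := by
    rw [Eall_diag, ← Matrix.diagonal_one, Matrix.diagonal_sub]
    refine Matrix.posSemidef_diagonal_iff.mpr fun x => ?_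
    have : (1 : ℂ) - ((∏ j, d0r (x j) : ℝ) : ℂ) = (((1 - ∏ j, d0r (x j) : ℝ)) : ℂ) := by
      push_cast; ring
    rw [this, Complex.zero_le_real, sub_nonneg]
    exact Finset.prod_le_one (fun j _ => d0r_nonneg (x j)) (fun j _ => d0r_le_one (x j))
  have expand : bigU m * ((1 : Matrix (Fin m → Fin 2) (Fin m → Fin 2) ℂ) - Eall m) * (bigU m)ᴴ
      = 1 - PiT m := by
    rw [Matrix.mul_sub, Matrix.sub_mul, mul_one, bigU_unitary, conj_Eall]
  rw [← expand]
  exact hD.mul_mul_conjTranspose_same (bigU m)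

lemma trace_mul_outer {N : Type*} [Fintype N] (A : Matrix N N ℂ) (ψ : N → ℂ) :
    (A * Matrix.of (fun x y : N => ψ x * star (ψ y))).trace = star ψ ⬝ᵥ A *ᵥ ψ := by
  simp only [Matrix.trace, Matrix.diag, Matrix.mul_apply, Matrix.of_apply,
    dotProduct, Matrix.mulVec, Pi.star_apply, Finset.mul_sum]
  refine Finset.sum_congr rfl fun x _ => Finset.sum_congr rfl fun y _ => by ring

lemma PiT_outer (m : ℕ) :
    PiT m = Matrix.of fun x y => TketPow m x * star (TketPow m y) := by
  ext x y
  simp only [PiT, tens_apply, Tmat, Matrix.of_apply, TketPow, Finset.prod_mul_distrib]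
  congr 1
  rw [Complex.star_def, map_prod]

lemma overlap_eq_trace {m : ℕ} (A : Matrix (Fin m → Fin 2) (Fin m → Fin 2) ℂ) :
    overlap A (TketPow m) = ((A * PiT m).trace).re := by
  rw [overlap, PiT_outer, trace_mul_outer]

lemma real_smul_eq {N : Type*} [Fintype N] (r : ℝ) (M : Matrix N N ℂ) :
    r • M = ((r : ℂ)) • M := by
  ext i j
  simp [Matrix.smul_apply, Complex.real_smul]


end MSD

open MSD in
/-- **Theorem 3.**  Lower bound on the overhead of magic state distillation. -/
theorem magic_state_distillation_overhead {D : ℕ}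
    (ρhat : Matrix (Fin D) (Fin D) ℂ) (hρ : IsDensity ρhat) (hρfull : 0 < minEig ρhat)
    (F : Set (Matrix (Fin D) (Fin D) ℂ)) (hFne : F.Nonempty) (hFcl : IsClosed F)
    (hFden : ∀ ω ∈ F, IsDensity ω)
    (hRfin : (RobustSet F ρhat).Nonempty)
    (n m : ℕ) (hn : 1 ≤ n) (hm : 1 ≤ m)
    (Fn : Set (Matrix (Fin n → Fin D) (Fin n → Fin D) ℂ)) (hFncl : IsClosed Fn)
    (hFnden : ∀ ω ∈ Fn, IsDensity ω)
    (hFnpow : ∀ ω ∈ F, kronPow ω n ∈ Fn)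
    (F'm : Set (Matrix (Fin m → Fin 2) (Fin m → Fin 2) ℂ))
    (hF'den : ∀ ω ∈ F'm, IsDensity ω)
    (hF'overlap : ∀ ω ∈ F'm, overlap ω (TketPow m) ≤ ((4 - 2 * Real.sqrt 2) ^ m)⁻¹)
    (L G : Matrix (Fin n → Fin D) (Fin n → Fin D) ℂ →ₗ[ℂ]
      Matrix (Fin m → Fin 2) (Fin m → Fin 2) ℂ)
    (hLpos : PosMap L) (hGpos : PosMap G)
    (hTP : ∀ X, (L X).trace + (G X).trace = X.trace)
    (hLfree : ∀ ω ∈ Fn, ∃ t : ℝ, 0 ≤ t ∧ ∃ ω' ∈ F'm, L ω = (t : ℂ) • ω')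
    (p : ℝ) (hp : p = ((L (kronPow ρhat n)).trace).re) (hppos : 0 < p)
    (τ : Matrix (Fin m → Fin 2) (Fin m → Fin 2) ℂ)
    (hτ : τ = p⁻¹ • L (kronPow ρhat n))
    (ε : ℝ) (hε : 0 ≤ ε)
    (hmarg : ∀ i : Fin m, 1 - ε ≤ ((τ * margTProj m i).trace).re) :
    minEig ρhat ^ n * (1 - ((4 - 2 * Real.sqrt 2) ^ m)⁻¹) /
        ((m : ℝ) * (1 + Robustness F ρhat) ^ n) ≤ ε / p ∧
    (0 < ε →
      ((4 - 2 * Real.sqrt 2) ^ m - 1) * p / ((4 - 2 * Real.sqrt 2) ^ m * (m : ℝ) * ε)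
        ≤ ((1 + Robustness F ρhat) / minEig ρhat) ^ n) := by
  classical
  -- basic notation and positivity facts
  have hρH : ρhat.IsHermitian := hρ.1.1
  set lam := minEig ρhat with hlam
  set R := Robustness F ρhat with hR
  set c : ℝ := (4 - 2 * Real.sqrt 2) ^ m with hc
  have hsqrt2 : Real.sqrt 2 < 1.5 := by
    nlinarith [Real.sq_sqrt (show (0:ℝ) ≤ 2 by norm_num), Real.sqrt_nonneg 2]
  have hbase : (1 : ℝ) < 4 - 2 * Real.sqrt 2 := by nlinarith
  have hc1 : (1 : ℝ) < c := one_lt_pow₀ hbase (by omega)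
  have hcpos : (0 : ℝ) < c := lt_trans one_pos hc1
  have hcinv : c⁻¹ < 1 := by
    rw [inv_lt_one_iff₀]; right; exact hc1
  have honec : (0 : ℝ) ≤ 1 - c⁻¹ := by linarith
  have hlampos : 0 < lam := hρfull
  have hlamn : (0:ℝ) < lam ^ n := pow_pos hlampos n
  have hK0 : (0:ℝ) ≤ lam ^ n * (1 - c⁻¹) := mul_nonneg hlamn.le honec
  -- the input state and its basic properties
  set X := kronPow ρhat n with hXdef
  have hX : X.PosSemidef := by
    rw [hXdef, kronPow_eq_tens]; exact tens_posSemidef _ fun _ => hρ.1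
  have hXtr : X.trace = 1 := by rw [hXdef, trace_kronPow, hρ.2, one_pow]
  have hLXpsd : (L X).PosSemidef := hLpos X hX
  have hGXpsd : (G X).PosSemidef := hGpos X hX
  -- p ≤ 1
  have hple1 : p ≤ 1 := by
    have h := hTP X
    rw [hXtr] at h
    have h2 := congrArg Complex.re h
    rw [Complex.add_re] at h2
    have h3 := cpos_re (psd_trace_nonneg hGXpsd)
    rw [hp]
    simp only [Complex.one_re] at h2
    linarith
  -- marginal overlaps of L X
  have hAi : ∀ i : Fin m, (1 - ε) * p ≤ (((L X) * margTProj m i).trace).re := by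
    intro i
    have h := hmarg i
    rw [hτ, Matrix.smul_mul, real_smul_eq, Matrix.trace_smul, smul_eq_mul,
      Complex.re_ofReal_mul] at h
    have := mul_le_mul_of_nonneg_right h hppos.le
    calc (1 - ε) * p ≤ p⁻¹ * ((L X * margTProj m i).trace).re * p := this
      _ = (((L X) * margTProj m i).trace).re := by field_simp
  -- union bound : p - Tr(LX Π) ≤ p * m * ε
  have hstepA : p - ((L X * PiT m).trace).re ≤ p * ((m : ℝ) * ε) := by
    have h0 := trace_mul_psd_re_nonneg hLXpsd (N_psd m)
    have hAN : (L X * (((m : ℂ) - 1) • 1 + PiT m - ∑ i, margTProj m i)).trace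
        = ((m : ℂ) - 1) * (L X).trace + (L X * PiT m).trace
          - ∑ i, (L X * margTProj m i).trace := by
      rw [Matrix.mul_sub, Matrix.mul_add, Matrix.mul_smul, mul_one, Matrix.trace_sub,
        Matrix.trace_add, Matrix.trace_smul, Finset.mul_sum, Matrix.trace_sum]
      simp [smul_eq_mul]
    rw [hAN] at h0
    have hcast : ((m : ℂ) - 1) = (((m : ℝ) - 1 : ℝ) : ℂ) := by push_cast; ring
    rw [hcast, Complex.sub_re, Complex.add_re, Complex.re_ofReal_mul, Complex.re_sum] at h0
    have hsum : (m : ℝ) * ((1 - ε) * p) ≤ ∑ i, ((L X * margTProj m i).trace).re := by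
      calc (m : ℝ) * ((1 - ε) * p) = ∑ _i : Fin m, (1 - ε) * p := by
            rw [Finset.sum_const, Finset.card_univ, Fintype.card_fin, nsmul_eq_mul]
        _ ≤ _ := Finset.sum_le_sum fun i _ => hAi i
    have hptr : ((L X).trace).re = p := hp.symm
    rw [hptr] at h0
    nlinarith
  -- per-robustness-witness inequality
  have key : ∀ s ∈ RobustSet F ρhat, lam ^ n * (1 - c⁻¹) ≤ (m : ℝ) * ε * (1 + s) ^ n := by
    intro s hs
    obtain ⟨hs0, σ, hσ, hωF⟩ := hs
    set ω := (1 + s)⁻¹ • (ρhat + s • σ) with hωdef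
    have hωD : IsDensity ω := hFden _ hωF
    have h1s : (0 : ℝ) < 1 + s := by linarith
    have hup : ((1 + s : ℝ)) • ω = ρhat + s • σ := by
      rw [hωdef, smul_smul, mul_inv_cancel₀ h1s.ne', one_smul]
    have hBA1 : ((((1 + s : ℝ)) : ℂ) • ω - ρhat).PosSemidef := by
      rw [← real_smul_eq, hup, add_sub_cancel_left, real_smul_eq]
      exact smul_psd hs0 hσ.1
    have hm1 : ((((1 + s : ℝ)) : ℂ) ^ n • kronPow ω n - X).PosSemidef := by
      have h := tens_const_sub_psd hρ.1 hBA1 n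
      rw [← kronPow_eq_tens, ← kronPow_eq_tens, kronPow_smul] at h
      exact h
    have hlamω : (((lam : ℝ) : ℂ) • ω).PosSemidef := smul_psd hlampos.le hωD.1
    have hsub : (ρhat - ((lam : ℝ) : ℂ) • ω).PosSemidef :=
      sub_smul_density_psd hρH hωD hlampos.le
    have hm2 : (X - ((lam : ℝ) : ℂ) ^ n • kronPow ω n).PosSemidef := by
      have h := tens_const_sub_psd hlamω hsub n
      rw [← kronPow_eq_tens, ← kronPow_eq_tens, kronPow_smul] at h
      exact h
    set Y := kronPow ω n with hYdef
    have hYFn : Y ∈ Fn := hFnpow ω hωF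
    obtain ⟨t, ht0, ω', hω'F, hLY⟩ := hLfree Y hYFn
    have hω'D : IsDensity ω' := hF'den ω' hω'F
    -- trace lower bound for t
    have hM1 : ((((1 + s : ℝ)) : ℂ) ^ n • L Y - L X).PosSemidef := by
      have h := hLpos _ hm1
      rwa [map_sub, map_smul] at h
    have ht_lower : p ≤ (1 + s) ^ n * t := by
      have h := cpos_re (psd_trace_nonneg hM1)
      simp only [Matrix.trace_sub, hLY, Matrix.trace_smul, smul_eq_mul, hω'D.2,
        mul_one] at h
      have hcast : ((((1 + s : ℝ)) : ℂ)) ^ n * (t : ℂ) = (((1 + s) ^ n * t : ℝ) : ℂ) := by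
        push_cast; ring
      rw [hcast, Complex.sub_re, Complex.ofReal_re] at h
      rw [hp]
      linarith
    -- overlap upper bound : lam^n t (1 - c⁻¹) ≤ p m ε
    have hM2 : (L X - (((lam : ℝ) : ℂ) ^ n * (t : ℂ)) • ω').PosSemidef := by
      have h := hLpos _ hm2
      rw [map_sub, map_smul, hLY, smul_smul] at h
      exact h
    have hw' : ((ω' * PiT m).trace).re ≤ c⁻¹ := by
      have h := hF'overlap ω' hω'F
      rwa [overlap_eq_trace] at h
    have hB := trace_mul_psd_re_nonneg hM2 (one_sub_PiT_psd m)
    have hexp : ((L X - (((lam : ℝ) : ℂ) ^ n * (t : ℂ)) • ω') * (1 - PiT m)).trace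
        = (L X).trace - (L X * PiT m).trace
          - (((lam : ℝ) : ℂ) ^ n * (t : ℂ)) * (ω'.trace - (ω' * PiT m).trace) := by
      simp only [Matrix.sub_mul, Matrix.mul_sub, Matrix.smul_mul, mul_one,
        Matrix.trace_sub, Matrix.trace_smul, smul_eq_mul]
      ring
    rw [hexp] at hB
    have hcast2 : (((lam : ℝ) : ℂ)) ^ n * (t : ℂ) = ((lam ^ n * t : ℝ) : ℂ) := by
      push_cast; ring
    rw [hω'D.2, hcast2, Complex.sub_re, Complex.sub_re, Complex.re_ofReal_mul,
      Complex.sub_re, Complex.one_re] at hB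
    rw [hp] at hstepA
    -- now pure real arithmetic
    set aPi := ((L X * PiT m).trace).re
    set w' := ((ω' * PiT m).trace).re
    have hut : 0 ≤ lam ^ n * t := mul_nonneg hlamn.le ht0
    have h1 : lam ^ n * t * (1 - c⁻¹) ≤ ((L X).trace).re * ((m : ℝ) * ε) := by
      have e1 : lam ^ n * t * (1 - c⁻¹) ≤ lam ^ n * t * (1 - w') := by
        apply mul_le_mul_of_nonneg_left _ hut
        linarith
      have e2 : lam ^ n * t * (1 - w') ≤ ((L X).trace).re - aPi := by linarith
      linarith
    -- combine with t ≥ p/(1+s)^n and divide by p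
    have hspow : (0:ℝ) ≤ (1 + s) ^ n := (pow_pos h1s n).le
    have e3 : lam ^ n * (1 - c⁻¹) * ((L X).trace).re
        ≤ ((m : ℝ) * ε * (1 + s) ^ n) * ((L X).trace).re := by
      have f1 : lam ^ n * (1 - c⁻¹) * ((L X).trace).re
          ≤ lam ^ n * (1 - c⁻¹) * ((1 + s) ^ n * t) := by
        apply mul_le_mul_of_nonneg_left _ hK0
        rw [← hp]
        exact ht_lower
      have f2 : lam ^ n * (1 - c⁻¹) * ((1 + s) ^ n * t)
          = (1 + s) ^ n * (lam ^ n * t * (1 - c⁻¹)) := by ring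
      have f3 : (1 + s) ^ n * (lam ^ n * t * (1 - c⁻¹))
          ≤ (1 + s) ^ n * (((L X).trace).re * ((m : ℝ) * ε)) :=
        mul_le_mul_of_nonneg_left h1 hspow
      have f4 : (1 + s) ^ n * (((L X).trace).re * ((m : ℝ) * ε))
          = ((m : ℝ) * ε * (1 + s) ^ n) * ((L X).trace).re := by ring
      linarith
    have hppos' : 0 < ((L X).trace).re := by rw [← hp]; exact hppos
    exact le_of_mul_le_mul_right (by linarith) hppos'
  -- pass to the infimum
  have hbdd : BddBelow (RobustSet F ρhat) := ⟨0, fun s hs => hs.1⟩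
  have hR0 : 0 ≤ R := le_csInf hRfin fun s hs => hs.1
  have h1R : (0:ℝ) < 1 + R := by linarith
  have hKR : lam ^ n * (1 - c⁻¹) ≤ (m : ℝ) * ε * (1 + R) ^ n := by
    by_contra hcon
    push_neg at hcon
    set f : ℝ → ℝ := fun x => (m : ℝ) * ε * (1 + x) ^ n with hf
    have hcont : ContinuousAt f R :=
      (continuous_const.mul ((continuous_const.add continuous_id).pow n)).continuousAt
    set K := lam ^ n * (1 - c⁻¹) with hKdef
    have hη : 0 < K - f R := by simp only [hf]; linarith
    obtain ⟨δ, hδ0, hδ⟩ := Metric.continuousAt_iff.mp hcont (K - f R) hη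
    have hRS : R = sInf (RobustSet F ρhat) := hR.trans rfl
    have hinf : sInf (RobustSet F ρhat) < R + δ := by
      rw [← hRS]; linarith
    obtain ⟨s, hsS, hslt⟩ := exists_lt_of_csInf_lt hRfin hinf
    have hsge : R ≤ s := csInf_le hbdd hsS
    have hdist : dist s R < δ := by
      rw [Real.dist_eq, abs_of_nonneg (by linarith)]
      linarith
    have := hδ hdist
    rw [Real.dist_eq] at this
    have hfs : f s < K := by
      rcases abs_sub_lt_iff.mp this with ⟨h1, _⟩
      linarith
    exact absurd (key s hsS) (by simp only [hf] at hfs ⊢; linarith)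
  constructor
  · -- first inequality
    have hden : (0:ℝ) < (m : ℝ) * (1 + R) ^ n := by
      apply mul_pos _ (pow_pos h1R n)
      exact_mod_cast Nat.pos_of_ne_zero (by omega)
    rw [div_le_div_iff₀ hden hppos]
    have hrearr : (m : ℝ) * ε * (1 + R) ^ n = ε * ((m : ℝ) * (1 + R) ^ n) := by ring
    have h2 : lam ^ n * (1 - c⁻¹) * p ≤ lam ^ n * (1 - c⁻¹) :=
      mul_le_of_le_one_right hK0 hple1
    linarith
  · -- second inequality
    intro hεpos
    rw [div_pow]
    have hdenom : (0:ℝ) < c * (m : ℝ) * ε := by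
      apply mul_pos (mul_pos hcpos _) hεpos
      exact_mod_cast Nat.pos_of_ne_zero (by omega)
    rw [div_le_div_iff₀ hdenom hlamn]
    have hcc : c * (1 - c⁻¹) = c - 1 := by field_simp
    have h1 : p * (lam ^ n * (1 - c⁻¹)) ≤ 1 * ((m : ℝ) * ε * (1 + R) ^ n) :=
      mul_le_mul hple1 hKR hK0 one_pos.le
    have h2 : c * (p * (lam ^ n * (1 - c⁻¹))) ≤ c * (1 * ((m : ℝ) * ε * (1 + R) ^ n)) :=
      mul_le_mul_of_nonneg_left h1 hcpos.le
    calc (c - 1) * p * lam ^ n = c * (p * (lam ^ n * (1 - c⁻¹))) := by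
          rw [← hcc]; ring
      _ ≤ c * (1 * ((m : ℝ) * ε * (1 + R) ^ n)) := h2
      _ = (1 + R) ^ n * (c * (m : ℝ) * ε) := by ring
end
end

section
/- Let ρ be a full-rank density matrix on ℂ^d, let σ be a density matrix on ℂ^d, and let 0 ≤ ε < λ_min(ρ). Then β_ε(ρ‖σ) ≥ (λ_min(ρ) − ε)/λ_min(ρ); equivalently, 0 ≤ D_H^ε(ρ‖σ) ≤ log(λ_min(ρ)/(λ_min(ρ) − ε)). In particular, the hypothesis testing relative entropy of a full-rank state is continuous at ε = 0, where it vanishes. (Lemma S1.) -/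
open scoped Matrix ComplexOrder

noncomputable section

/-- The optimal hypothesis-testing error
`β_ε(ρ‖σ) = inf { Tr(M σ) : 0 ≤ M ≤ I, Tr(ρ M) ≥ 1 - ε }`. -/
noncomputable def betaErr {n : Type*} [Fintype n] [DecidableEq n] (ε : ℝ)
    (ρ σ : Matrix n n ℂ) : ℝ :=
  sInf {x : ℝ | ∃ M : Matrix n n ℂ, M.PosSemidef ∧ (1 - M).PosSemidef ∧
    1 - ε ≤ ((ρ * M).trace).re ∧ x = ((σ * M).trace).re}

/-- The hypothesis testing relative entropy `D_H^ε(ρ‖σ) = -log β_ε(ρ‖σ)`. -/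
noncomputable def DH {n : Type*} [Fintype n] [DecidableEq n] (ε : ℝ)
    (ρ σ : Matrix n n ℂ) : ℝ :=
  - Real.log (betaErr ε ρ σ)

namespace HypTestAux

open Matrix

variable {n : Type*} [Fintype n] [DecidableEq n]

/-- Each diagonal entry of a PSD matrix has nonnegative real part. -/
lemma diag_re_nonneg {C : Matrix n n ℂ} (hC : C.PosSemidef) (i : n) :
    0 ≤ (C i i).re := by
  have h := hC.dotProduct_mulVec_nonneg (Pi.single i 1)
  have hval : star (Pi.single i 1 : n → ℂ) ⬝ᵥ C.mulVec (Pi.single i 1) = C i i := by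
    have hstar : star (Pi.single i 1 : n → ℂ) = Pi.single i 1 := by
      ext j; by_cases h : j = i <;> simp [Pi.single_apply, h]
    rw [hstar]
    simp [single_dotProduct, Matrix.mulVec_single]
  rw [hval] at h
  exact (Complex.nonneg_iff.mp h).1

/-- The real part of the trace of a PSD matrix is nonnegative. -/
lemma trace_re_nonneg {C : Matrix n n ℂ} (hC : C.PosSemidef) : 0 ≤ C.trace.re := by
  rw [Matrix.trace, Complex.re_sum]
  exact Finset.sum_nonneg fun i _ => diag_re_nonneg hC i

open scoped MatrixOrder in
/-- The real part of the trace of a product of PSD matrices is nonnegative. -/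
lemma trace_mul_re_nonneg {A B : Matrix n n ℂ} (hA : A.PosSemidef) (hB : B.PosSemidef) :
    0 ≤ ((A * B).trace).re := by
  have hs : (CFC.sqrt A).PosSemidef := (CFC.sqrt_nonneg A).posSemidef
  have hkey : (A * B).trace = (CFC.sqrt A * B * CFC.sqrt A).trace := by
    conv_lhs => rw [← CFC.sqrt_mul_sqrt_self A hA.nonneg]
    rw [Matrix.mul_assoc, Matrix.trace_mul_comm, Matrix.mul_assoc]
  rw [hkey]
  have : ((CFC.sqrt A)ᴴ * B * CFC.sqrt A).PosSemidef := hB.conjTranspose_mul_mul_same (CFC.sqrt A)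
  rw [hs.1.eq] at this
  exact trace_re_nonneg this

lemma conj_diag_posSemidef {A : Matrix n n ℂ} (hA : A.IsHermitian) {f : n → ℝ}
    (hf : ∀ i, 0 ≤ f i) :
    ((hA.eigenvectorUnitary : Matrix n n ℂ) * Matrix.diagonal (fun i => (f i : ℂ)) *
      star (hA.eigenvectorUnitary : Matrix n n ℂ)).PosSemidef := by
  have hd : (Matrix.diagonal (fun i => ((f i : ℝ) : ℂ))).PosSemidef :=
    Matrix.posSemidef_diagonal_iff.mpr fun i => Complex.zero_le_real.mpr (hf i)
  simpa [Matrix.star_eq_conjTranspose] using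
    hd.mul_mul_conjTranspose_same (hA.eigenvectorUnitary : Matrix n n ℂ)

lemma diagonal_sub_smul_one {f : n → ℝ} {c : ℝ} :
    Matrix.diagonal (fun i => ((f i - c : ℝ) : ℂ)) =
      Matrix.diagonal (RCLike.ofReal ∘ f) - (c : ℂ) • 1 := by
  ext i j
  by_cases h : i = j <;>
    simp [Matrix.diagonal_apply, h, Matrix.one_apply, Complex.ofReal_sub]

lemma smul_one_sub_diagonal {f : n → ℝ} {c : ℝ} :
    Matrix.diagonal (fun i => ((c - f i : ℝ) : ℂ)) =
      (c : ℂ) • 1 - Matrix.diagonal (RCLike.ofReal ∘ f) := by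
  ext i j
  by_cases h : i = j <;>
    simp [Matrix.diagonal_apply, h, Matrix.one_apply, Complex.ofReal_sub]

lemma UUstar {A : Matrix n n ℂ} (hA : A.IsHermitian) :
    (hA.eigenvectorUnitary : Matrix n n ℂ) * star (hA.eigenvectorUnitary : Matrix n n ℂ) = 1 :=
  Matrix.mem_unitaryGroup_iff.mp hA.eigenvectorUnitary.2

/-- `A - c•1` is PSD when `c` is below all eigenvalues of `A`. -/
lemma sub_smul_one_posSemidef {A : Matrix n n ℂ} (hA : A.IsHermitian) {c : ℝ}
    (hc : ∀ i, c ≤ hA.eigenvalues i) : (A - (c : ℂ) • 1).PosSemidef := by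
  have key : A - (c : ℂ) • 1 =
      (hA.eigenvectorUnitary : Matrix n n ℂ) *
        Matrix.diagonal (fun i => ((hA.eigenvalues i - c : ℝ) : ℂ)) *
        star (hA.eigenvectorUnitary : Matrix n n ℂ) := by
    rw [diagonal_sub_smul_one, Matrix.mul_sub, Matrix.sub_mul, Matrix.mul_smul,
      Matrix.smul_mul, mul_one, UUstar hA, ← Unitary.conjStarAlgAut_apply (S := ℂ), ← hA.spectral_theorem]
  rw [key]
  exact conj_diag_posSemidef hA fun i => sub_nonneg.mpr (hc i)

/-- `c•1 - A` is PSD when `c` is above all eigenvalues of `A`. -/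
lemma smul_one_sub_posSemidef {A : Matrix n n ℂ} (hA : A.IsHermitian) {c : ℝ}
    (hc : ∀ i, hA.eigenvalues i ≤ c) : ((c : ℂ) • 1 - A).PosSemidef := by
  have key : (c : ℂ) • 1 - A =
      (hA.eigenvectorUnitary : Matrix n n ℂ) *
        Matrix.diagonal (fun i => ((c - hA.eigenvalues i : ℝ) : ℂ)) *
        star (hA.eigenvectorUnitary : Matrix n n ℂ) := by
    rw [smul_one_sub_diagonal, Matrix.mul_sub, Matrix.sub_mul, Matrix.mul_smul,
      Matrix.smul_mul, mul_one, UUstar hA, ← Unitary.conjStarAlgAut_apply (S := ℂ), ← hA.spectral_theorem]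
  rw [key]
  exact conj_diag_posSemidef hA fun i => sub_nonneg.mpr (hc i)

lemma trace_eq_sum_eigs {A : Matrix n n ℂ} (hA : A.IsHermitian) :
    A.trace = ∑ i, (hA.eigenvalues i : ℂ) := by
  conv_lhs => rw [hA.spectral_theorem, Unitary.conjStarAlgAut_apply]
  rw [Matrix.trace_mul_cycle,
    Matrix.mem_unitaryGroup_iff'.mp hA.eigenvectorUnitary.2, one_mul, Matrix.trace_diagonal]
  rfl

end HypTestAux

/-- **Lemma S1.**  For a full-rank state `ρ` and `0 ≤ ε < λ_min(ρ)`,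
`β_ε(ρ‖σ) ≥ (λ_min(ρ) - ε)/λ_min(ρ)`; equivalently
`0 ≤ D_H^ε(ρ‖σ) ≤ log(λ_min(ρ)/(λ_min(ρ) - ε))`.  In particular the hypothesis testing
relative entropy of a full-rank state is continuous at `ε = 0`, where it vanishes. -/
theorem hypothesis_testing_continuity {d : ℕ}
    (ρ σ : Matrix (Fin d) (Fin d) ℂ) (hρ : IsDensity ρ) (hσ : IsDensity σ)
    (hρfull : 0 < minEig ρ)
    (ε : ℝ) (hε : 0 ≤ ε) (hεlt : ε < minEig ρ) :
    (minEig ρ - ε) / minEig ρ ≤ betaErr ε ρ σ ∧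
    0 ≤ DH ε ρ σ ∧ DH ε ρ σ ≤ Real.log (minEig ρ / (minEig ρ - ε)) := by
  open HypTestAux in
  obtain ⟨hρP, hρtr⟩ := hρ
  obtain ⟨hσP, hσtr⟩ := hσ
  have hρH : ρ.IsHermitian := hρP.1
  have hσH : σ.IsHermitian := hσP.1
  set lam := minEig ρ with hlam
  have hmin : lam = ⨅ i, hρH.eigenvalues i := by
    rw [hlam, minEig, dif_pos hρH]
  have hlam_le : ∀ i, lam ≤ hρH.eigenvalues i := fun i => by
    rw [hmin]
    exact ciInf_le (Set.Finite.bddBelow (Set.finite_range _)) i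
  -- ρ - lam • 1 is PSD
  have hρlam : (ρ - (lam : ℂ) • 1).PosSemidef := sub_smul_one_posSemidef hρH hlam_le
  -- 1 - σ is PSD
  have hσev_le : ∀ i, hσH.eigenvalues i ≤ 1 := by
    intro i
    have hsum : ∑ j, hσH.eigenvalues j = 1 := by
      have := trace_eq_sum_eigs hσH
      rw [hσtr] at this
      have := congrArg Complex.re this.symm
      simpa [Complex.re_sum] using this
    calc hσH.eigenvalues i ≤ ∑ j, hσH.eigenvalues j :=
          Finset.single_le_sum (fun j _ => hσP.eigenvalues_nonneg j) (Finset.mem_univ i)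
      _ = 1 := hsum
  have hσ1 : ((1 : Matrix (Fin d) (Fin d) ℂ) - σ).PosSemidef := by
    have := smul_one_sub_posSemidef hσH hσev_le
    simpa using this
  have hlam' : 0 < lam := hρfull
  have hεlam : 0 < lam - ε := by linarith
  set c := (lam - ε) / lam with hc
  have hcpos : 0 < c := div_pos hεlam hlam'
  have hc1 : c ≤ 1 := by
    rw [hc, div_le_one hlam']; linarith
  -- key bound: every feasible point is ≥ c
  have hbound : ∀ x ∈ {x : ℝ | ∃ M : Matrix (Fin d) (Fin d) ℂ, M.PosSemidef ∧
      (1 - M).PosSemidef ∧ 1 - ε ≤ ((ρ * M).trace).re ∧ x = ((σ * M).trace).re}, c ≤ x := by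
    rintro x ⟨M, hM, hM1, htr, rfl⟩
    set t := ((1 - M : Matrix (Fin d) (Fin d) ℂ).trace).re with ht
    -- λ t ≤ Tr(ρ (1-M)).re ≤ ε
    have h1 : 0 ≤ (((ρ - (lam : ℂ) • 1) * (1 - M)).trace).re :=
      trace_mul_re_nonneg hρlam hM1
    have hexp1 : (((ρ - (lam : ℂ) • 1) * (1 - M)).trace).re
        = ((ρ * (1 - M)).trace).re - lam * t := by
      rw [Matrix.sub_mul, Matrix.trace_sub, Complex.sub_re, Matrix.smul_mul, one_mul,
        Matrix.trace_smul, smul_eq_mul, Complex.re_ofReal_mul]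
    have hexp2 : ((ρ * (1 - M)).trace).re = 1 - ((ρ * M).trace).re := by
      rw [Matrix.mul_sub, mul_one, Matrix.trace_sub, Complex.sub_re, hρtr]
      simp
    have hρ1M : ((ρ * (1 - M)).trace).re ≤ ε := by rw [hexp2]; linarith
    have hlt : lam * t ≤ ε := by
      rw [hexp1, hexp2] at h1; linarith
    have htle : t ≤ ε / lam := by
      rw [le_div_iff₀ hlam']; linarith [hlt, mul_comm t lam]
    -- Tr(σ(1-M)).re ≤ t
    have h2 : 0 ≤ ((((1 : Matrix (Fin d) (Fin d) ℂ) - σ) * (1 - M)).trace).re :=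
      trace_mul_re_nonneg hσ1 hM1
    have hexp3 : ((((1 : Matrix (Fin d) (Fin d) ℂ) - σ) * (1 - M)).trace).re
        = t - ((σ * (1 - M)).trace).re := by
      rw [Matrix.sub_mul, one_mul, Matrix.trace_sub, Complex.sub_re]
    have hexp4 : ((σ * (1 - M)).trace).re = 1 - ((σ * M).trace).re := by
      rw [Matrix.mul_sub, mul_one, Matrix.trace_sub, Complex.sub_re, hσtr]
      simp
    have : 1 - ((σ * M).trace).re ≤ ε / lam := by
      rw [← hexp4]; linarith [h2, hexp3 ▸ h2, htle]
    have hfin : 1 - ε / lam ≤ ((σ * M).trace).re := by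
      rw [hexp4] at hexp3
      have := hexp3 ▸ h2
      linarith
    calc c = 1 - ε / lam := by rw [hc, sub_div, div_self hlam'.ne']
      _ ≤ ((σ * M).trace).re := hfin
  -- the feasible set is nonempty (M = 1)
  have hmem1 : (1 : ℝ) ∈ {x : ℝ | ∃ M : Matrix (Fin d) (Fin d) ℂ, M.PosSemidef ∧
      (1 - M).PosSemidef ∧ 1 - ε ≤ ((ρ * M).trace).re ∧ x = ((σ * M).trace).re} := by
    refine ⟨1, Matrix.PosSemidef.one, by simpa using Matrix.PosSemidef.zero, ?_, ?_⟩
    · rw [mul_one, hρtr]; simpa using hε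
    · rw [mul_one, hσtr]; simp
  have hβlow : c ≤ betaErr ε ρ σ := le_csInf ⟨1, hmem1⟩ hbound
  have hβhigh : betaErr ε ρ σ ≤ 1 := csInf_le ⟨c, hbound⟩ hmem1
  have hβpos : 0 < betaErr ε ρ σ := lt_of_lt_of_le hcpos hβlow
  refine ⟨hβlow, ?_, ?_⟩
  · rw [DH, neg_nonneg]
    exact Real.log_nonpos hβpos.le hβhigh
  · rw [DH]
    have hlog : Real.log c ≤ Real.log (betaErr ε ρ σ) := Real.log_le_log hcpos hβlow
    have : Real.log (lam / (lam - ε)) = - Real.log c := by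
      rw [hc, ← Real.log_inv, inv_div]
    rw [this]
    linarith
end
end

section
/- Let σ₁, σ₂ be density matrices on ℂ^a, let ω₁, ω₂ be density matrices on ℂ^b, let p₁, p₂ ∈ [0,1], and let ε ∈ [0,1). Define the block-diagonal density matrices ρᵢ := diag(pᵢ·σᵢ, (1 − pᵢ)·ωᵢ) on ℂ^{a+b} (Matrix.fromBlocks with zero off-diagonal blocks) for i = 1, 2. Then β_ε(ρ₁‖ρ₂) ≤ p₂·β_ε(σ₁‖σ₂) + (1 − p₂)·β_ε(ω₁‖ω₂). (Lemma S2: hypothesis-testing error of flagged states.) -/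
open scoped Matrix ComplexOrder

noncomputable section

lemma psd_trace_re_nonneg {n : Type*} [Fintype n] [DecidableEq n] {P : Matrix n n ℂ}
    (h : P.PosSemidef) : 0 ≤ P.trace.re := by
  rw [Matrix.trace, Complex.re_sum]
  refine Finset.sum_nonneg fun i _ => ?_
  have := h.re_dotProduct_nonneg (Pi.single i 1)
  simpa [dotProduct, Matrix.mulVec, Pi.single_apply, Finset.sum_ite_eq,
    Matrix.diag] using this

open scoped MatrixOrder in
lemma trace_mul_psd_re_nonneg {n : Type*} [Fintype n] [DecidableEq n]
    {A B : Matrix n n ℂ} (hA : A.PosSemidef) (hB : B.PosSemidef) :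
    0 ≤ ((A * B).trace).re := by
  have h1 : (A * B).trace = (CFC.sqrt B * A * CFC.sqrt B).trace := by
    conv_lhs => rw [← CFC.sqrt_mul_sqrt_self B hB.nonneg]
    rw [← Matrix.mul_assoc, Matrix.trace_mul_cycle]
  rw [h1]
  have hherm : (CFC.sqrt B).conjTranspose = CFC.sqrt B := (Matrix.nonneg_iff_posSemidef.mp (CFC.sqrt_nonneg B)).isHermitian
  have : ((CFC.sqrt B)ᴴ * A * CFC.sqrt B).PosSemidef := hA.conjTranspose_mul_mul_same (CFC.sqrt B)
  rw [hherm] at this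
  exact psd_trace_re_nonneg this

lemma fromBlocks_posSemidef {a b : Type*} [Fintype a] [Fintype b] [DecidableEq a] [DecidableEq b]
    {M : Matrix a a ℂ} {N : Matrix b b ℂ} (hM : M.PosSemidef) (hN : N.PosSemidef) :
    (Matrix.fromBlocks M 0 0 N).PosSemidef := by
  refine Matrix.PosSemidef.of_dotProduct_mulVec_nonneg ?_ ?_
  · unfold Matrix.IsHermitian
    rw [Matrix.fromBlocks_conjTranspose]
    simp [hM.isHermitian.eq, hN.isHermitian.eq]
  · intro x
    have hx : x = Sum.elim (x ∘ Sum.inl) (x ∘ Sum.inr) := by ext (i|i) <;> rfl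
    rw [hx, Matrix.fromBlocks_mulVec]
    have := hM.dotProduct_mulVec_nonneg (x ∘ Sum.inl)
    have := hN.dotProduct_mulVec_nonneg (x ∘ Sum.inr)
    simp only [Matrix.zero_mulVec, add_zero, zero_add]
    rw [show star (Sum.elim (x ∘ Sum.inl) (x ∘ Sum.inr)) =
      Sum.elim (star (x ∘ Sum.inl)) (star (x ∘ Sum.inr)) by ext (i|i) <;> rfl]
    rw [sumElim_dotProduct_sumElim]
    positivity

lemma psd_real_smul {n : Type*} [Fintype n] {A : Matrix n n ℂ} {c : ℝ} (hc : 0 ≤ c)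
    (hA : A.PosSemidef) : (c • A).PosSemidef := by
  refine Matrix.PosSemidef.of_dotProduct_mulVec_nonneg ?_ ?_
  · unfold Matrix.IsHermitian
    rw [Matrix.conjTranspose_smul_non_comm _ _ (fun _ _ => by simp [mul_comm])]
    simp [hA.isHermitian.eq]
  · intro x
    have h := hA.dotProduct_mulVec_nonneg x
    rw [Matrix.smul_mulVec, dotProduct_smul]
    rw [show c • (star x ⬝ᵥ (A *ᵥ x)) = (c : ℂ) * (star x ⬝ᵥ (A *ᵥ x)) from
      Complex.real_smul]
    exact mul_nonneg (by exact_mod_cast hc) h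

lemma trace_fromBlocks' {a b : Type*} [Fintype a] [Fintype b]
    (A : Matrix a a ℂ) (B : Matrix a b ℂ) (C : Matrix b a ℂ) (D : Matrix b b ℂ) :
    (Matrix.fromBlocks A B C D).trace = A.trace + D.trace := by
  simp [Matrix.trace, Fintype.sum_sum_type, Matrix.diag]

/-- **Lemma S2.**  Hypothesis-testing error of flagged (block-diagonal) states:
`β_ε(ρ₁‖ρ₂) ≤ p₂ β_ε(σ₁‖σ₂) + (1 - p₂) β_ε(ω₁‖ω₂)` where
`ρᵢ = diag(pᵢ σᵢ, (1 - pᵢ) ωᵢ)`. -/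
theorem flagged_state_beta {a b : ℕ}
    (σ₁ σ₂ : Matrix (Fin a) (Fin a) ℂ) (hσ₁ : IsDensity σ₁) (hσ₂ : IsDensity σ₂)
    (ω₁ ω₂ : Matrix (Fin b) (Fin b) ℂ) (hω₁ : IsDensity ω₁) (hω₂ : IsDensity ω₂)
    (p₁ p₂ : ℝ) (hp₁ : p₁ ∈ Set.Icc (0 : ℝ) 1) (hp₂ : p₂ ∈ Set.Icc (0 : ℝ) 1)
    (ε : ℝ) (hε0 : 0 ≤ ε) (hε1 : ε < 1) :
    betaErr ε
        (Matrix.fromBlocks (p₁ • σ₁) 0 0 ((1 - p₁) • ω₁))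
        (Matrix.fromBlocks (p₂ • σ₂) 0 0 ((1 - p₂) • ω₂)) ≤
      p₂ * betaErr ε σ₁ σ₂ + (1 - p₂) * betaErr ε ω₁ ω₂ := by
  obtain ⟨hp₁0, hp₁1⟩ := hp₁
  obtain ⟨hp₂0, hp₂1⟩ := hp₂
  set ρ₁ := Matrix.fromBlocks (p₁ • σ₁) (0 : Matrix (Fin a) (Fin b) ℂ) 0 ((1 - p₁) • ω₁) with hρ₁
  set ρ₂ := Matrix.fromBlocks (p₂ • σ₂) (0 : Matrix (Fin a) (Fin b) ℂ) 0 ((1 - p₂) • ω₂) with hρ₂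
  have hρ₂psd : ρ₂.PosSemidef :=
    fromBlocks_posSemidef (psd_real_smul hp₂0 hσ₂.1) (psd_real_smul (by linarith) hω₂.1)
  -- nonemptiness of the single-system feasible sets, via M = 1
  have hfeas : ∀ {n : ℕ} (τ₁ τ₂ : Matrix (Fin n) (Fin n) ℂ), IsDensity τ₁ →
      Set.Nonempty {x : ℝ | ∃ M : Matrix (Fin n) (Fin n) ℂ, M.PosSemidef ∧
        (1 - M).PosSemidef ∧ 1 - ε ≤ ((τ₁ * M).trace).re ∧ x = ((τ₂ * M).trace).re} := by
    intro n τ₁ τ₂ hτ₁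
    exact ⟨((τ₂ * 1).trace).re, 1, Matrix.PosSemidef.one, by
      simpa using Matrix.PosSemidef.zero, by
        rw [mul_one, hτ₁.2]; simpa using hε0, rfl⟩
  refine le_of_forall_pos_le_add fun δ hδ => ?_
  obtain ⟨x, ⟨M, hM1, hM2, hM3, hxval⟩, hxlt⟩ :=
    Real.lt_sInf_add_pos (hfeas σ₁ σ₂ hσ₁) hδ
  obtain ⟨y, ⟨N, hN1, hN2, hN3, hyval⟩, hylt⟩ :=
    Real.lt_sInf_add_pos (hfeas ω₁ ω₂ hω₁) hδ
  set K := Matrix.fromBlocks M (0 : Matrix (Fin a) (Fin b) ℂ) 0 N with hK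
  have hKpsd : K.PosSemidef := fromBlocks_posSemidef hM1 hN1
  have hKle : ((1 : Matrix (Fin a ⊕ Fin b) (Fin a ⊕ Fin b) ℂ) - K).PosSemidef := by
    have : (1 : Matrix (Fin a ⊕ Fin b) (Fin a ⊕ Fin b) ℂ) - K =
        Matrix.fromBlocks (1 - M) 0 0 (1 - N) := by
      rw [hK, ← Matrix.fromBlocks_one]
      ext (i|i) (j|j) <;> simp [Matrix.fromBlocks]
    rw [this]
    exact fromBlocks_posSemidef hM2 hN2
  have key : ∀ (q : ℝ) (A : Matrix (Fin a) (Fin a) ℂ) (B : Matrix (Fin b) (Fin b) ℂ),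
      (((Matrix.fromBlocks (q • A) (0 : Matrix (Fin a) (Fin b) ℂ) 0 ((1 - q) • B)) * K).trace).re
        = q * ((A * M).trace).re + (1 - q) * ((B * N).trace).re := by
    intro q A B
    rw [hK, Matrix.fromBlocks_multiply]
    simp only [Matrix.mul_zero, Matrix.zero_mul, add_zero, zero_add]
    rw [trace_fromBlocks', Matrix.smul_mul, Matrix.smul_mul, Matrix.trace_smul,
      Matrix.trace_smul, Complex.add_re, Complex.smul_re, Complex.smul_re]
    simp [smul_eq_mul]
  have hmem : (((ρ₂ * K).trace).re : ℝ) ∈ {x : ℝ | ∃ M' : Matrix (Fin a ⊕ Fin b) (Fin a ⊕ Fin b) ℂ,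
      M'.PosSemidef ∧ (1 - M').PosSemidef ∧ 1 - ε ≤ ((ρ₁ * M').trace).re ∧
      x = ((ρ₂ * M').trace).re} := by
    refine ⟨K, hKpsd, hKle, ?_, rfl⟩
    rw [hρ₁, key]
    nlinarith
  have hbdd : BddBelow {x : ℝ | ∃ M' : Matrix (Fin a ⊕ Fin b) (Fin a ⊕ Fin b) ℂ,
      M'.PosSemidef ∧ (1 - M').PosSemidef ∧ 1 - ε ≤ ((ρ₁ * M').trace).re ∧
      x = ((ρ₂ * M').trace).re} := by
    refine ⟨0, fun z hz => ?_⟩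
    obtain ⟨M', hM'1, _, _, rfl⟩ := hz
    exact trace_mul_psd_re_nonneg hρ₂psd hM'1
  have hle : betaErr ε ρ₁ ρ₂ ≤ ((ρ₂ * K).trace).re := csInf_le hbdd hmem
  have hval : ((ρ₂ * K).trace).re = p₂ * x + (1 - p₂) * y := by
    rw [hρ₂, key, hxval, hyval]
  rw [hval] at hle
  have h1 : p₂ * x ≤ p₂ * (betaErr ε σ₁ σ₂ + δ) :=
    mul_le_mul_of_nonneg_left hxlt.le hp₂0
  have h2 : (1 - p₂) * y ≤ (1 - p₂) * (betaErr ε ω₁ ω₂ + δ) :=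
    mul_le_mul_of_nonneg_left hylt.le (by linarith)
  calc betaErr ε ρ₁ ρ₂ ≤ p₂ * x + (1 - p₂) * y := hle
    _ ≤ p₂ * (betaErr ε σ₁ σ₂ + δ) + (1 - p₂) * (betaErr ε ω₁ ω₂ + δ) := by linarith
    _ = p₂ * betaErr ε σ₁ σ₂ + (1 - p₂) * betaErr ε ω₁ ω₂ + δ := by ring
end
end
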